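/- arXiv:0705.4312 — 9 statements merged into one kernel-verified Lean document; each statement's English description precedes it below -/
import Mathlib

section
/- Let Θ be the standard simplex in ℝ^k and let (μ_n) be a sequence of Borel probability measures on Θ. Let f : Θ → ℝ be a nonnegative bounded continuous function with f_max = sup_{θ∈Θ} f(θ), and for δ > 0 set Θ_δ = {θ ∈ Θ : f(θ) ≥ f_max − δ}. Let L : Θ → ℝ be a nonnegative bounded measurable function such that lim_{δ→0} inf_{θ∈Θ_δ} L(θ) = c > 0. If ∫_Θ f dμ_n → f_max as n → ∞, then ∫_Θ L dμ_n > 0 for all sufficiently large n and (∫_Θ f·L dμ_n)/(∫_Θ L dμ_n) → f_max as n → ∞. -/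
open MeasureTheory Filter Topology

set_option maxHeartbeats 1000000 in
/-- **Theorem 3 (technical preliminaries).**
Let `Θ` be the standard simplex in `ℝ^k` and `(μ n)` a sequence of Borel probability
measures on `Θ`.  Let `f : Θ → ℝ` be a nonnegative bounded continuous function with
supremum `fmax`, and for `δ > 0` let `Θ_δ = {θ ∈ Θ | f θ ≥ fmax - δ}`.  Let
`L : Θ → ℝ` be a nonnegative bounded measurable function with
`lim_{δ→0⁺} inf_{θ ∈ Θ_δ} L θ = c > 0`.  If `∫ f dμ_n → fmax`, then eventually
`∫ L dμ_n > 0` and `(∫ f·L dμ_n) / (∫ L dμ_n) → fmax`. -/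
theorem posterior_concentration_on_maximum
    (k : ℕ)
    (μ : ℕ → Measure (stdSimplex ℝ (Fin k)))
    (hμ : ∀ n, IsProbabilityMeasure (μ n))
    (f : stdSimplex ℝ (Fin k) → ℝ)
    (hf_nonneg : ∀ θ, 0 ≤ f θ)
    (hf_cont : Continuous f)
    (fmax : ℝ)
    (hfmax : IsLUB (Set.range f) fmax)
    (L : stdSimplex ℝ (Fin k) → ℝ)
    (hL_nonneg : ∀ θ, 0 ≤ L θ)
    (hL_bdd : ∃ C, ∀ θ, L θ ≤ C)
    (hL_meas : Measurable L)
    (c : ℝ) (hc : 0 < c)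
    (hlim : Tendsto (fun δ => sInf (L '' {θ | fmax - δ ≤ f θ})) (𝓝[>] (0 : ℝ)) (𝓝 c))
    (hconv : Tendsto (fun n => ∫ θ, f θ ∂(μ n)) atTop (𝓝 fmax)) :
    (∀ᶠ n in atTop, 0 < ∫ θ, L θ ∂(μ n)) ∧
      Tendsto (fun n => (∫ θ, f θ * L θ ∂(μ n)) / (∫ θ, L θ ∂(μ n))) atTop (𝓝 fmax) := by
  have := hμ
  have hne : Nonempty (stdSimplex ℝ (Fin k)) := by
    by_contra h
    have h1 := (hμ 0).measure_univ
    rw [Set.univ_eq_empty_iff.2 (not_nonempty_iff.1 h), measure_empty] at h1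
    exact zero_ne_one h1
  obtain ⟨θ0⟩ := hne
  have hub : ∀ θ, f θ ≤ fmax := fun θ => hfmax.1 ⟨θ, rfl⟩
  have hfmax0 : 0 ≤ fmax := le_trans (hf_nonneg θ0) (hub θ0)
  obtain ⟨C, hC⟩ := hL_bdd
  have hC0 : 0 ≤ C := le_trans (hL_nonneg θ0) (hC θ0)
  have hfmeas : Measurable f := hf_cont.measurable
  have hfLmeas : Measurable fun θ => f θ * L θ := hfmeas.mul hL_meas
  have hint : ∀ (g : stdSimplex ℝ (Fin k) → ℝ) (B : ℝ), Measurable g → (∀ θ, 0 ≤ g θ) →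
      (∀ θ, g θ ≤ B) → ∀ n, Integrable g (μ n) := by
    intro g B hg h0 hB n
    haveI := hμ n
    exact (integrable_const B).mono' hg.aestronglyMeasurable
      (ae_of_all _ fun θ => by rw [Real.norm_eq_abs, abs_of_nonneg (h0 θ)]; exact hB θ)
  have hfint : ∀ n, Integrable f (μ n) := hint f fmax hfmeas hf_nonneg hub
  have hLint : ∀ n, Integrable L (μ n) := hint L C hL_meas hL_nonneg hC
  have hfLint : ∀ n, Integrable (fun θ => f θ * L θ) (μ n) :=
    hint _ (fmax * C) hfLmeas (fun θ => mul_nonneg (hf_nonneg θ) (hL_nonneg θ))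
      (fun θ => mul_le_mul (hub θ) (hC θ) (hL_nonneg θ) hfmax0)
  set S : ℝ → Set (stdSimplex ℝ (Fin k)) := fun δ => {θ | fmax - δ ≤ f θ} with hSdef
  have hSmeas : ∀ δ, MeasurableSet (S δ) := fun δ => measurableSet_le measurable_const hfmeas
  -- choice of δ
  have hδex : ∀ ε > (0:ℝ), ∃ δ, 0 < δ ∧ δ < ε ∧ ∀ θ ∈ S δ, c/2 ≤ L θ := by
    intro ε hε
    have h1 : ∀ᶠ δ in 𝓝[>] (0:ℝ), c/2 ≤ sInf (L '' {θ | fmax - δ ≤ f θ}) :=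
      hlim.eventually_const_le (by linarith)
    have h2 : Set.Ioo (0:ℝ) ε ∈ 𝓝[>] (0:ℝ) := Ioo_mem_nhdsGT_of_mem ⟨le_refl _, hε⟩
    obtain ⟨δ, hδ1, hδ2⟩ := (h1.and h2).exists
    refine ⟨δ, hδ2.1, hδ2.2, fun θ hθ => le_trans hδ1 ?_⟩
    exact csInf_le ⟨0, fun x ⟨y, _, hy⟩ => hy ▸ hL_nonneg y⟩ ⟨θ, hθ, rfl⟩
  have hF_le : ∀ n, ∫ θ, f θ ∂(μ n) ≤ fmax := by
    intro n
    haveI := hμ n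
    calc ∫ θ, f θ ∂(μ n) ≤ ∫ _θ, fmax ∂(μ n) :=
          integral_mono (hfint n) (integrable_const _) hub
      _ = fmax := by simp
  -- κ bound
  have hκ : ∀ δ, 0 < δ → ∀ n, ((μ n) (S δ)ᶜ).toReal ≤ (fmax - ∫ θ, f θ ∂(μ n)) / δ := by
    intro δ hδ' n
    haveI := hμ n
    rw [le_div_iff₀ hδ']
    have h1 : δ * ((μ n) (S δ)ᶜ).toReal ≤ ∫ θ in (S δ)ᶜ, (fmax - f θ) ∂(μ n) := by
      apply setIntegral_ge_of_const_le_real (hSmeas δ).compl (measure_ne_top _ _)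
      · intro θ hθ
        have h2 : ¬ (fmax - δ ≤ f θ) := hθ
        have h3 : f θ < fmax - δ := lt_of_not_ge h2
        linarith
      · exact ((integrable_const fmax).sub (hfint n)).integrableOn
    have h2 : ∫ θ in (S δ)ᶜ, (fmax - f θ) ∂(μ n) ≤ ∫ θ, (fmax - f θ) ∂(μ n) :=
      setIntegral_le_integral ((integrable_const fmax).sub (hfint n))
        (ae_of_all _ fun θ => by simp only [Pi.zero_apply, sub_nonneg]; exact hub θ)
    have h3 : ∫ θ, (fmax - f θ) ∂(μ n) = fmax - ∫ θ, f θ ∂(μ n) := by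
      rw [integral_sub (integrable_const _) (hfint n)]; simp
    nlinarith
  have hκ0 : ∀ δ n, (0:ℝ) ≤ ((μ n) (S δ)ᶜ).toReal := fun _ _ => ENNReal.toReal_nonneg
  have hκtend : ∀ δ, 0 < δ → Tendsto (fun n => ((μ n) (S δ)ᶜ).toReal) atTop (𝓝 0) := by
    intro δ hδ'
    apply squeeze_zero (fun n => hκ0 δ n) (fun n => hκ δ hδ' n)
    have h := ((tendsto_const_nhds (x := fmax)).sub hconv).div_const δ
    simpa using h
  have hμS : ∀ δ n, ((μ n) (S δ)).toReal = 1 - ((μ n) (S δ)ᶜ).toReal := by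
    intro δ n
    haveI := hμ n
    have h := measure_add_measure_compl (μ := μ n) (hSmeas δ)
    rw [measure_univ] at h
    have h2 := congrArg ENNReal.toReal h
    rw [ENNReal.toReal_add (measure_ne_top _ _) (measure_ne_top _ _)] at h2
    simp only [ENNReal.toReal_one] at h2
    linarith
  have hI_ge : ∀ δ, (∀ θ ∈ S δ, c/2 ≤ L θ) →
      ∀ n, c/2 * ((μ n) (S δ)).toReal ≤ ∫ θ, L θ ∂(μ n) := by
    intro δ hLδ n
    calc c/2 * ((μ n) (S δ)).toReal ≤ ∫ θ in S δ, L θ ∂(μ n) :=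
          setIntegral_ge_of_const_le_real (hSmeas δ) (measure_ne_top _ _) hLδ (hLint n).integrableOn
      _ ≤ ∫ θ, L θ ∂(μ n) := setIntegral_le_integral (hLint n) (ae_of_all _ hL_nonneg)
  -- first conjunct, quantitative
  obtain ⟨δ1, hδ1pos, _, hLδ1⟩ := hδex 1 one_pos
  have hevI : ∀ᶠ n in atTop, c/4 ≤ ∫ θ, L θ ∂(μ n) := by
    filter_upwards [(hκtend δ1 hδ1pos).eventually (gt_mem_nhds (by norm_num : (0:ℝ) < 1/2))]
      with n hn
    have h1 := hI_ge δ1 hLδ1 n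
    rw [hμS δ1 n] at h1
    nlinarith
  have hpos : ∀ᶠ n in atTop, 0 < ∫ θ, L θ ∂(μ n) := by
    filter_upwards [hevI] with n hn; linarith
  refine ⟨hpos, tendsto_order.2 ⟨?_, ?_⟩⟩
  · -- lower bound
    intro a ha
    set ε := fmax - a with hεdef
    have hε : 0 < ε := by simp [hεdef]; linarith
    obtain ⟨δ, hδpos, hδlt, hLδ⟩ := hδex (ε/2) (by linarith)
    set ρ := ε * c / (16 * (fmax * C + 1)) with hρdef
    have hρpos : 0 < ρ := by
      apply div_pos (by nlinarith) (by nlinarith)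
    filter_upwards [hevI, hpos,
      (hκtend δ hδpos).eventually (ge_mem_nhds hρpos)] with n hI4 hIpos hκρ
    haveI := hμ n
    set I := ∫ θ, L θ ∂(μ n) with hIdef
    set J := ∫ θ, f θ * L θ ∂(μ n) with hJdef
    set T := ∫ θ in S δ, L θ ∂(μ n) with hTdef
    set κ := ((μ n) (S δ)ᶜ).toReal with hκdef
    have hκnn : 0 ≤ κ := ENNReal.toReal_nonneg
    have hJT : (fmax - δ) * T ≤ J := by
      calc (fmax - δ) * T = ∫ θ in S δ, (fmax - δ) * L θ ∂(μ n) :=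
            (integral_const_mul _ _).symm
        _ ≤ ∫ θ in S δ, f θ * L θ ∂(μ n) := by
            apply setIntegral_mono_on ((hLint n).const_mul _).integrableOn
              (hfLint n).integrableOn (hSmeas δ)
            intro θ hθ
            exact mul_le_mul_of_nonneg_right hθ (hL_nonneg θ)
        _ ≤ J := setIntegral_le_integral (hfLint n)
            (ae_of_all _ fun θ => mul_nonneg (hf_nonneg θ) (hL_nonneg θ))
    have hT2 : T ≤ I := setIntegral_le_integral (hLint n) (ae_of_all _ hL_nonneg)
    have hT0 : 0 ≤ T := setIntegral_nonneg (hSmeas δ) fun θ _ => hL_nonneg θ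
    have hJ0 : 0 ≤ J := integral_nonneg fun θ => mul_nonneg (hf_nonneg θ) (hL_nonneg θ)
    have hcompl : ∫ θ in (S δ)ᶜ, L θ ∂(μ n) ≤ C * κ := by
      calc ∫ θ in (S δ)ᶜ, L θ ∂(μ n) ≤ ∫ _θ in (S δ)ᶜ, C ∂(μ n) :=
            setIntegral_mono_on (hLint n).integrableOn
              (integrableOn_const (measure_ne_top _ _)) (hSmeas δ).compl
              (fun θ _ => hC θ)
        _ = κ * C := by rw [setIntegral_const]; rfl
        _ = C * κ := mul_comm _ _
    have hT1 : I - C * κ ≤ T := by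
      have h := integral_add_compl (hSmeas δ) (hLint n)
      have : T + ∫ θ in (S δ)ᶜ, L θ ∂(μ n) = I := h
      linarith
    -- show a < J / I
    rw [lt_div_iff₀ hIpos]
    clear_value I J T κ
    have key : (fmax - 3*ε/4) * I ≤ J := by
      rcases le_or_gt δ fmax with hcase | hcase
      · have h1 : (fmax - δ) * (I - C * κ) ≤ (fmax - δ) * T :=
          mul_le_mul_of_nonneg_left hT1 (by linarith)
        have e5 : (fmax - δ) * I - (fmax - δ) * C * κ ≤ J := by nlinarith
        have e0 : (fmax - δ) * C ≤ fmax * C + 1 := by nlinarith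
        have e1 : (fmax - δ) * C * κ ≤ (fmax * C + 1) * ρ :=
          mul_le_mul e0 hκρ hκnn (by positivity)
        have e2 : (fmax * C + 1) * ρ = ε * c / 16 := by
          rw [hρdef]; field_simp
        have e3 : (fmax - 3*ε/4) * I ≤ (fmax - δ) * I - ε/4 * I := by nlinarith
        have e4 : ε * c / 16 ≤ ε/4 * I := by nlinarith
        linarith
      · have h1 : fmax - 3*ε/4 < 0 := by linarith
        have h2 : (fmax - 3*ε/4) * I ≤ 0 :=
          mul_nonpos_of_nonpos_of_nonneg h1.le (by linarith)
        linarith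
    have ha' : a = fmax - ε := by rw [hεdef]; ring
    nlinarith
  · intro a ha
    filter_upwards [hpos] with n hIpos
    haveI := hμ n
    have hJ_le : ∫ θ, f θ * L θ ∂(μ n) ≤ fmax * ∫ θ, L θ ∂(μ n) := by
      calc ∫ θ, f θ * L θ ∂(μ n) ≤ ∫ θ, fmax * L θ ∂(μ n) :=
            integral_mono (hfLint n) ((hLint n).const_mul fmax)
              (fun θ => mul_le_mul_of_nonneg_right (hub θ) (hL_nonneg θ))
        _ = fmax * ∫ θ, L θ ∂(μ n) := integral_const_mul _ _
    calc (∫ θ, f θ * L θ ∂(μ n)) / (∫ θ, L θ ∂(μ n)) ≤ fmax :=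
          (div_le_iff₀ hIpos).2 (by rw [mul_comm] at hJ_le ⊢; exact hJ_le)
      _ < a := ha
end

section
/- Let Θ be the standard simplex in ℝ^k, let M be a nonempty set of Borel probability measures on Θ, let f : Θ → ℝ be a continuous function with maximum value f_max on Θ, and let L : Θ → ℝ be a nonnegative bounded measurable function (the likelihood) such that L is strictly positive at every point θ where f(θ) = f_max and L is continuous on some neighborhood (relative to Θ) of each such point. If the prior upper expectation of f is vacuous, i.e. sup_{μ∈M} ∫_Θ f dμ = f_max, then the posterior upper expectation of f is also vacuous: sup{ (∫_Θ f·L dμ)/(∫_Θ L dμ) : μ ∈ M, ∫_Θ L dμ > 0 } = f_max. -/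
open MeasureTheory Filter Topology

/-- **Theorem 1.**
Let `Θ` be the standard simplex in `ℝ^k`, `M` a nonempty set of Borel probability
measures on `Θ` (the near-ignorance prior), `f : Θ → ℝ` a continuous function with
maximum value `fmax` on `Θ`, and `L : Θ → ℝ` a nonnegative bounded measurable
likelihood that is strictly positive at every point where `f` attains `fmax` and
continuous on a neighborhood (relative to `Θ`) of each such point.  If the prior
upper expectation of `f` is vacuous, `sup_{μ∈M} ∫ f dμ = fmax`, then the posterior
upper expectation of `f` is also vacuous:
`sup { (∫ f·L dμ)/(∫ L dμ) | μ ∈ M, ∫ L dμ > 0 } = fmax`. -/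
theorem vacuous_posterior_upper_expectation
    (k : ℕ)
    (M : Set (Measure (stdSimplex ℝ (Fin k))))
    (hM : M.Nonempty)
    (hMprob : ∀ μ ∈ M, IsProbabilityMeasure μ)
    (f : stdSimplex ℝ (Fin k) → ℝ)
    (hf_cont : Continuous f)
    (fmax : ℝ)
    (hmax_le : ∀ θ, f θ ≤ fmax)
    (hmax_att : ∃ θ, f θ = fmax)
    (L : stdSimplex ℝ (Fin k) → ℝ)
    (hL_nonneg : ∀ θ, 0 ≤ L θ)
    (hL_bdd : ∃ C, ∀ θ, L θ ≤ C)
    (hL_meas : Measurable L)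
    (hL_max : ∀ θ, f θ = fmax → 0 < L θ ∧ ∃ U ∈ 𝓝 θ, ContinuousOn L U)
    (hprior : sSup {r | ∃ μ ∈ M, r = ∫ θ, f θ ∂μ} = fmax) :
    sSup {r | ∃ μ ∈ M, 0 < ∫ θ, L θ ∂μ ∧
        r = (∫ θ, f θ * L θ ∂μ) / (∫ θ, L θ ∂μ)} = fmax := by
  classical
  set K : Set (stdSimplex ℝ (Fin k)) := {θ | f θ = fmax} with hKdef
  have hKne : K.Nonempty := hmax_att
  have hKclosed : IsClosed K := isClosed_eq hf_cont continuous_const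
  have hKcomp : IsCompact K := hKclosed.isCompact
  have hLcontAt : ∀ θ ∈ K, ContinuousAt L θ := by
    intro θ hθ
    obtain ⟨-, U, hU, hcont⟩ := hL_max θ hθ
    exact (hcont θ (mem_of_mem_nhds hU)).continuousAt hU
  obtain ⟨θ0, hθ0K, hθ0min⟩ := hKcomp.exists_isMinOn hKne
      (fun θ hθ => (hLcontAt θ hθ).continuousWithinAt)
  haveI : Nonempty (stdSimplex ℝ (Fin k)) := ⟨θ0⟩
  set c : ℝ := L θ0 / 2 with hcdef
  have hc0 : 0 < c := half_pos (hL_max θ0 hθ0K).1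
  -- an open set W ⊇ K on which L ≥ c
  have hV : ∀ θ ∈ K, ∃ V : Set (stdSimplex ℝ (Fin k)),
      IsOpen V ∧ θ ∈ V ∧ ∀ x ∈ V, c < L x := by
    intro θ hθ
    have h1 : c < L θ :=
      lt_of_lt_of_le (half_lt_self (hL_max θ0 hθ0K).1) (isMinOn_iff.mp hθ0min θ hθ)
    have h2 : L ⁻¹' Set.Ioi c ∈ 𝓝 θ := (hLcontAt θ hθ) (isOpen_Ioi.mem_nhds h1)
    obtain ⟨V, hVsub, hVopen, hθV⟩ := mem_nhds_iff.mp h2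
    exact ⟨V, hVopen, hθV, fun x hx => hVsub hx⟩
  choose V hVopen hVmem hVlt using hV
  set W : Set (stdSimplex ℝ (Fin k)) := ⋃ (θ : _) (hθ : θ ∈ K), V θ hθ with hWdef
  have hWopen : IsOpen W := isOpen_iUnion fun θ => isOpen_iUnion fun hθ => hVopen θ hθ
  have hKW : K ⊆ W := fun θ hθ => Set.mem_iUnion.2 ⟨θ, Set.mem_iUnion.2 ⟨hθ, hVmem θ hθ⟩⟩
  have hWpos : ∀ x ∈ W, c ≤ L x := by
    intro x hx
    obtain ⟨θ, hθ⟩ := Set.mem_iUnion.1 hx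
    obtain ⟨hθK, hxV⟩ := Set.mem_iUnion.1 hθ
    exact (hVlt θ hθK x hxV).le
  have hWmeas : MeasurableSet W := hWopen.measurableSet
  -- a gap η on the complement of W
  have hηex : ∃ η > 0, ∀ θ, θ ∉ W → η + f θ ≤ fmax := by
    rcases Set.eq_empty_or_nonempty Wᶜ with h | h
    · exact ⟨1, one_pos, fun θ hθ => absurd (h ▸ hθ : θ ∈ (∅ : Set _)) (Set.notMem_empty θ)⟩
    · obtain ⟨θ1, hθ1, hθ1max⟩ := (hWopen.isClosed_compl.isCompact).exists_isMaxOn h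
        hf_cont.continuousOn
      have hne : f θ1 ≠ fmax := fun hh => hθ1 (hKW hh)
      refine ⟨fmax - f θ1, by
        have := lt_of_le_of_ne (hmax_le θ1) hne; linarith, fun θ hθ => ?_⟩
      have := isMaxOn_iff.mp hθ1max θ hθ
      linarith
  obtain ⟨η, hηpos, hηle⟩ := hηex
  -- bound on L
  obtain ⟨C, hC⟩ := hL_bdd
  set C' : ℝ := max C 1 with hC'def
  have hC'pos : (0 : ℝ) < C' := lt_of_lt_of_le one_pos (le_max_right _ _)
  have hC'le : ∀ θ, L θ ≤ C' := fun θ => (hC θ).trans (le_max_left _ _)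
  have hLnorm : ∀ θ, ‖L θ‖ ≤ C' := fun θ => by
    rw [Real.norm_eq_abs, abs_of_nonneg (hL_nonneg θ)]; exact hC'le θ
  -- bound on f
  obtain ⟨θB, -, hθB⟩ := isCompact_univ.exists_isMaxOn Set.univ_nonempty
      hf_cont.norm.continuousOn
  have hfnorm : ∀ θ, ‖f θ‖ ≤ ‖f θB‖ := fun θ => isMaxOn_iff.mp hθB θ (Set.mem_univ θ)
  set S := {r | ∃ μ ∈ M, 0 < ∫ θ, L θ ∂μ ∧
      r = (∫ θ, f θ * L θ ∂μ) / (∫ θ, L θ ∂μ)} with hSdef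
  -- upper bound
  have hub : ∀ r ∈ S, r ≤ fmax := by
    rintro r ⟨μ, hμM, hD, rfl⟩
    haveI := hMprob μ hμM
    have hLint : Integrable L μ :=
      ⟨hL_meas.aestronglyMeasurable,
        HasFiniteIntegral.of_bounded (C := C') (Eventually.of_forall hLnorm)⟩
    have hfLint : Integrable (fun θ => f θ * L θ) μ :=
      hLint.bdd_mul hf_cont.aestronglyMeasurable (Eventually.of_forall hfnorm)
    have hle : ∫ θ, f θ * L θ ∂μ ≤ fmax * ∫ θ, L θ ∂μ := by
      rw [← integral_const_mul]
      exact integral_mono hfLint (hLint.const_mul fmax)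
        (fun θ => mul_le_mul_of_nonneg_right (hmax_le θ) (hL_nonneg θ))
    exact (div_le_iff₀ hD).2 hle
  -- key approximation
  have key : ∀ ε : ℝ, 0 < ε → ∃ r ∈ S, fmax - ε ≤ r := by
    intro ε hε
    set δ : ℝ := min (η / 2) (ε * c / (2 * C')) with hδdef
    have hδpos : 0 < δ := lt_min (half_pos hηpos) (by positivity)
    have hδη : δ ≤ η / 2 := min_le_left _ _
    have hδε : δ ≤ ε * c / (2 * C') := min_le_right _ _
    have hne : {r | ∃ μ ∈ M, r = ∫ θ, f θ ∂μ}.Nonempty := by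
      obtain ⟨μ0, hμ0⟩ := hM; exact ⟨_, μ0, hμ0, rfl⟩
    have hlt : fmax - δ < sSup {r | ∃ μ ∈ M, r = ∫ θ, f θ ∂μ} := by rw [hprior]; linarith
    obtain ⟨r', ⟨μ, hμM, rfl⟩, hr'⟩ := exists_lt_of_lt_csSup hne hlt
    haveI := hMprob μ hμM
    have hintf : Integrable f μ :=
      hf_cont.integrable_of_hasCompactSupport (isClosed_tsupport f).isCompact
    have hLint : Integrable L μ :=
      ⟨hL_meas.aestronglyMeasurable,
        HasFiniteIntegral.of_bounded (C := C') (Eventually.of_forall hLnorm)⟩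
    have hfLint : Integrable (fun θ => f θ * L θ) μ :=
      hLint.bdd_mul hf_cont.aestronglyMeasurable (Eventually.of_forall hfnorm)
    have hgap_int : Integrable (fun θ => fmax - f θ) μ := (integrable_const fmax).sub hintf
    have h1 : ∫ θ, (fmax - f θ) ∂μ < δ := by
      rw [integral_sub (integrable_const fmax) hintf, integral_const]
      simp only [measureReal_def, measure_univ, ENNReal.toReal_one, one_smul]
      linarith
    -- bound on μ Wᶜ
    have hcompl : η * (μ Wᶜ).toReal ≤ ∫ θ, (fmax - f θ) ∂μ := by
      have heq : η * (μ Wᶜ).toReal = ∫ θ, Wᶜ.indicator (fun _ => η) θ ∂μ := by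
        rw [integral_indicator_const _ hWmeas.compl, smul_eq_mul, mul_comm, measureReal_def]
      rw [heq]
      refine integral_mono ((integrable_const η).indicator hWmeas.compl) hgap_int fun θ => ?_
      by_cases hθ : θ ∈ Wᶜ
      · rw [Set.indicator_of_mem hθ]
        have := hηle θ hθ; linarith
      · rw [Set.indicator_of_notMem hθ]
        have := hmax_le θ; linarith
    have htc : (μ Wᶜ).toReal ≤ δ / η := by
      rw [le_div_iff₀ hηpos]
      nlinarith
    have hadd : (μ W).toReal + (μ Wᶜ).toReal = 1 := by
      rw [← ENNReal.toReal_add (measure_ne_top μ W) (measure_ne_top μ Wᶜ),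
        measure_add_measure_compl hWmeas]
      simp
    have hδη' : δ / η ≤ 1 / 2 := by
      calc δ / η ≤ (η / 2) / η := by gcongr
        _ = 1 / 2 := by field_simp
    have hhalf : (1 : ℝ) / 2 ≤ (μ W).toReal := by linarith
    -- lower bound on ∫ L
    have hDge : c * (μ W).toReal ≤ ∫ θ, L θ ∂μ := by
      have heq : c * (μ W).toReal = ∫ θ, W.indicator (fun _ => c) θ ∂μ := by
        rw [integral_indicator_const _ hWmeas, smul_eq_mul, mul_comm, measureReal_def]
      rw [heq]
      refine integral_mono ((integrable_const c).indicator hWmeas) hLint fun θ => ?_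
      by_cases hθ : θ ∈ W
      · rw [Set.indicator_of_mem hθ]; exact hWpos θ hθ
      · rw [Set.indicator_of_notMem hθ]; exact hL_nonneg θ
    have hDc : c / 2 ≤ ∫ θ, L θ ∂μ := by nlinarith
    have hDpos : 0 < ∫ θ, L θ ∂μ := lt_of_lt_of_le (by positivity) hDc
    -- numerator bound
    have hnum : ∫ θ, (fmax - f θ) * L θ ∂μ ≤ C' * δ := by
      have step1 : ∫ θ, (fmax - f θ) * L θ ∂μ ≤ ∫ θ, C' * (fmax - f θ) ∂μ := by
        refine integral_mono (hLint.bdd_mul (continuous_const.sub hf_cont).aestronglyMeasurable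
          (c := |fmax| + ‖f θB‖) (Eventually.of_forall fun θ => by
            have := hfnorm θ
            calc ‖fmax - f θ‖ ≤ ‖(fmax : ℝ)‖ + ‖f θ‖ := norm_sub_le _ _
              _ ≤ |fmax| + ‖f θB‖ := by rw [Real.norm_eq_abs]; linarith))
          (hgap_int.const_mul C') fun θ => ?_
        have h2 : (fmax - f θ) * L θ ≤ (fmax - f θ) * C' :=
          mul_le_mul_of_nonneg_left (hC'le θ) (by have := hmax_le θ; linarith)
        linarith [h2, mul_comm (fmax - f θ) C']
      calc ∫ θ, (fmax - f θ) * L θ ∂μ ≤ ∫ θ, C' * (fmax - f θ) ∂μ := step1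
        _ = C' * ∫ θ, (fmax - f θ) ∂μ := integral_const_mul _ _
        _ ≤ C' * δ := mul_le_mul_of_nonneg_left h1.le hC'pos.le
    have hsplit : ∫ θ, (fmax - f θ) * L θ ∂μ
        = fmax * (∫ θ, L θ ∂μ) - ∫ θ, f θ * L θ ∂μ := by
      simp only [sub_mul]
      rw [integral_sub (hLint.const_mul fmax) hfLint, integral_const_mul]
    have hnum' : fmax * (∫ θ, L θ ∂μ) - C' * δ ≤ ∫ θ, f θ * L θ ∂μ := by linarith
    refine ⟨(∫ θ, f θ * L θ ∂μ) / (∫ θ, L θ ∂μ), ⟨μ, hμM, hDpos, rfl⟩, ?_⟩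
    rw [le_div_iff₀ hDpos]
    have hCε : C' * δ ≤ ε * ∫ θ, L θ ∂μ := by
      have h2 : C' * δ ≤ C' * (ε * c / (2 * C')) := mul_le_mul_of_nonneg_left hδε hC'pos.le
      have h3 : C' * (ε * c / (2 * C')) = ε * (c / 2) := by field_simp
      have h4 : ε * (c / 2) ≤ ε * ∫ θ, L θ ∂μ := mul_le_mul_of_nonneg_left hDc hε.le
      linarith
    have hexp : (fmax - ε) * (∫ θ, L θ ∂μ) = fmax * (∫ θ, L θ ∂μ) - ε * ∫ θ, L θ ∂μ :=
      sub_mul _ _ _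
    linarith
  -- conclusion
  obtain ⟨r1, hr1S, -⟩ := key 1 one_pos
  have hSne : S.Nonempty := ⟨r1, hr1S⟩
  have hbdd : BddAbove S := ⟨fmax, hub⟩
  refine le_antisymm (csSup_le hSne hub) (le_of_forall_pos_le_add fun ε hε => ?_)
  obtain ⟨r, hrS, hr⟩ := key ε hε
  have := le_csSup hbdd hrS
  linarith
end

section
/- Let Θ be the standard simplex in ℝ^k, let M be a nonempty set of Borel probability measures on Θ, let f : Θ → ℝ be a nonnegative continuous function with maximum value f_max, and for δ > 0 set Θ_δ = {θ ∈ Θ : f(θ) ≥ f_max − δ}. Let L : Θ → ℝ be a nonnegative bounded measurable function such that lim_{δ→0} inf_{θ∈Θ_δ} L(θ) = c > 0. If sup_{μ∈M} ∫_Θ f dμ = f_max, then sup{ (∫_Θ f·L dμ)/(∫_Θ L dμ) : μ ∈ M, ∫_Θ L dμ > 0 } = f_max. -/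
open MeasureTheory Filter Topology

set_option maxHeartbeats 1000000 in
/-- **Theorem 1 (version with the weaker likelihood assumption of the footnote).**
Let `Θ` be the standard simplex in `ℝ^k`, `M` a nonempty set of Borel probability
measures on `Θ`, `f : Θ → ℝ` a nonnegative continuous function with maximum value
`fmax`, and for `δ > 0` let `Θ_δ = {θ ∈ Θ | f θ ≥ fmax - δ}`.  Let `L : Θ → ℝ` be a
nonnegative bounded measurable likelihood with `lim_{δ→0⁺} inf_{θ∈Θ_δ} L θ = c > 0`.
If `sup_{μ∈M} ∫ f dμ = fmax`, then
`sup { (∫ f·L dμ)/(∫ L dμ) | μ ∈ M, ∫ L dμ > 0 } = fmax`. -/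
theorem vacuous_posterior_upper_expectation_of_liminf
    (k : ℕ)
    (M : Set (Measure (stdSimplex ℝ (Fin k))))
    (hM : M.Nonempty)
    (hMprob : ∀ μ ∈ M, IsProbabilityMeasure μ)
    (f : stdSimplex ℝ (Fin k) → ℝ)
    (hf_nonneg : ∀ θ, 0 ≤ f θ)
    (hf_cont : Continuous f)
    (fmax : ℝ)
    (hmax_le : ∀ θ, f θ ≤ fmax)
    (hmax_att : ∃ θ, f θ = fmax)
    (L : stdSimplex ℝ (Fin k) → ℝ)
    (hL_nonneg : ∀ θ, 0 ≤ L θ)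
    (hL_bdd : ∃ C, ∀ θ, L θ ≤ C)
    (hL_meas : Measurable L)
    (c : ℝ) (hc : 0 < c)
    (hlim : Tendsto (fun δ => sInf (L '' {θ | fmax - δ ≤ f θ})) (𝓝[>] (0 : ℝ)) (𝓝 c))
    (hprior : sSup {r | ∃ μ ∈ M, r = ∫ θ, f θ ∂μ} = fmax) :
    sSup {r | ∃ μ ∈ M, 0 < ∫ θ, L θ ∂μ ∧
        r = (∫ θ, f θ * L θ ∂μ) / (∫ θ, L θ ∂μ)} = fmax := by
  classical
  obtain ⟨θ₀, hθ₀⟩ := hmax_att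
  have hfmax0 : 0 ≤ fmax := le_trans (hf_nonneg θ₀) (hmax_le θ₀)
  obtain ⟨C, hC⟩ := hL_bdd
  have hC0 : 0 ≤ C := le_trans (hL_nonneg θ₀) (hC θ₀)
  have hf_meas : Measurable f := hf_cont.measurable
  set A := {r | ∃ μ ∈ M, 0 < ∫ θ, L θ ∂μ ∧
      r = (∫ θ, f θ * L θ ∂μ) / (∫ θ, L θ ∂μ)} with hA
  -- integrability facts
  have hintL : ∀ μ ∈ M, Integrable L μ := by
    intro μ hμ
    haveI := hMprob μ hμ
    exact (integrable_const C).mono' hL_meas.aestronglyMeasurable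
      (Eventually.of_forall fun θ => by
        rw [Real.norm_eq_abs, abs_of_nonneg (hL_nonneg θ)]; exact hC θ)
  have hintf : ∀ μ ∈ M, Integrable f μ := by
    intro μ hμ
    haveI := hMprob μ hμ
    exact (integrable_const fmax).mono' hf_meas.aestronglyMeasurable
      (Eventually.of_forall fun θ => by
        rw [Real.norm_eq_abs, abs_of_nonneg (hf_nonneg θ)]; exact hmax_le θ)
  have hintfL : ∀ μ ∈ M, Integrable (fun θ => f θ * L θ) μ := by
    intro μ hμ
    haveI := hMprob μ hμ
    exact (integrable_const (fmax * C)).mono'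
      (hf_meas.mul hL_meas).aestronglyMeasurable
      (Eventually.of_forall fun θ => by
        rw [Real.norm_eq_abs, abs_of_nonneg (mul_nonneg (hf_nonneg θ) (hL_nonneg θ))]
        exact mul_le_mul (hmax_le θ) (hC θ) (hL_nonneg θ) hfmax0)
  -- upper bound
  have hub : ∀ r ∈ A, r ≤ fmax := by
    rintro r ⟨μ, hμ, hpos, rfl⟩
    rw [div_le_iff₀ hpos]
    calc ∫ θ, f θ * L θ ∂μ ≤ ∫ θ, fmax * L θ ∂μ := by
          refine integral_mono (hintfL μ hμ) ((hintL μ hμ).const_mul fmax) fun θ => ?_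
          exact mul_le_mul_of_nonneg_right (hmax_le θ) (hL_nonneg θ)
      _ = fmax * ∫ θ, L θ ∂μ := integral_const_mul fmax _
  refine le_antisymm (Real.sSup_le hub hfmax0) ?_
  -- lower bound: ∀ η > 0, fmax ≤ sSup A + η
  refine le_of_forall_pos_le_add fun η hη => ?_
  rw [← sub_le_iff_le_add]
  -- choose δ
  have hδev : ∀ᶠ δ in 𝓝[>] (0:ℝ),
      c / 2 ≤ sInf (L '' {θ | fmax - δ ≤ f θ}) ∧ δ < η / 2 ∧ 0 < δ := by
    refine ((hlim.eventually_const_le (by linarith)).and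
      (Filter.Eventually.and ?_ self_mem_nhdsWithin)).mono fun δ h => ⟨h.1, h.2.1, h.2.2⟩
    exact eventually_nhdsWithin_of_eventually_nhds (eventually_lt_nhds (by linarith))
  obtain ⟨δ, hm2, hδη, hδ0⟩ := hδev.exists
  set S : Set (stdSimplex ℝ (Fin k)) := {θ | fmax - δ ≤ f θ} with hS
  set m : ℝ := sInf (L '' S) with hm
  have hSmeas : MeasurableSet S := measurableSet_le measurable_const hf_meas
  have hmle : ∀ θ ∈ S, m ≤ L θ := fun θ hθ =>
    csInf_le ⟨0, by rintro x ⟨y, _, rfl⟩; exact hL_nonneg y⟩ ⟨θ, hθ, rfl⟩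
  -- choose ε and μ
  set ε : ℝ := min (δ / 2) (η * c * δ / (8 * (fmax * C + 1))) with hε
  have hfC1 : 0 < fmax * C + 1 := by positivity
  have hε0 : 0 < ε := lt_min (by linarith) (by positivity)
  have hεδ : ε / δ ≤ 1 / 2 := by
    rw [div_le_div_iff₀ hδ0 two_pos]
    have := min_le_left (δ / 2) (η * c * δ / (8 * (fmax * C + 1)))
    rw [← hε] at this; linarith
  have hε2 : (fmax * C + 1) * (ε / δ) ≤ η * c / 8 := by
    have h1 : ε ≤ η * c * δ / (8 * (fmax * C + 1)) := min_le_right _ _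
    have h2 : ε / δ ≤ η * c / (8 * (fmax * C + 1)) := by
      rw [div_le_div_iff₀ hδ0 (by positivity)]
      rw [le_div_iff₀ (by positivity)] at h1
      linarith
    calc (fmax * C + 1) * (ε / δ) ≤ (fmax * C + 1) * (η * c / (8 * (fmax * C + 1))) :=
          mul_le_mul_of_nonneg_left h2 hfC1.le
      _ = η * c / 8 := by field_simp
  obtain ⟨r, ⟨μ, hμM, rfl⟩, hrgt⟩ :
      ∃ r ∈ {r | ∃ μ ∈ M, r = ∫ θ, f θ ∂μ}, fmax - ε < r := by
    apply exists_lt_of_lt_csSup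
    · obtain ⟨ν, hν⟩ := hM; exact ⟨∫ θ, f θ ∂ν, ν, hν, rfl⟩
    · rw [hprior]; linarith
  haveI := hMprob μ hμM
  have hLint := hintL μ hμM
  have hfLint := hintfL μ hμM
  -- Markov: μ Sᶜ small
  have hcompl : (μ Sᶜ).toReal ≤ ε / δ := by
    have hptwise : ∀ θ, f θ ≤ fmax - Sᶜ.indicator (fun _ => δ) θ := by
      intro θ
      by_cases hθ : θ ∈ Sᶜ
      · rw [Set.indicator_of_mem hθ]
        have : ¬ (fmax - δ ≤ f θ) := hθ
        linarith [not_le.mp this]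
      · rw [Set.indicator_of_notMem hθ]; linarith [hmax_le θ]
    have hind : Integrable (Sᶜ.indicator (fun _ => δ)) μ :=
      (integrable_const δ).indicator hSmeas.compl
    have h1 : ∫ θ, f θ ∂μ ≤ ∫ θ, (fmax - Sᶜ.indicator (fun _ => δ) θ) ∂μ :=
      integral_mono (hintf μ hμM) ((integrable_const fmax).sub hind) hptwise
    rw [integral_sub (integrable_const fmax) hind, integral_const,
      integral_indicator_const _ hSmeas.compl, probReal_univ] at h1
    simp only [ENNReal.toReal_one, one_smul, smul_eq_mul, measureReal_def] at h1
    have h2 : (μ Sᶜ).toReal * δ ≤ ε := by linarith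
    rw [div_eq_mul_inv]
    calc (μ Sᶜ).toReal = (μ Sᶜ).toReal * δ * δ⁻¹ := by field_simp
      _ ≤ ε * δ⁻¹ := by
          exact mul_le_mul_of_nonneg_right h2 (inv_nonneg.mpr hδ0.le)
  have hScompl_fin : (μ S).toReal = 1 - (μ Sᶜ).toReal := by
    have h := measure_add_measure_compl (μ := μ) hSmeas
    rw [measure_univ] at h
    have h1 : (μ S).toReal + (μ Sᶜ).toReal = 1 := by
      rw [← ENNReal.toReal_add (measure_ne_top μ S) (measure_ne_top μ Sᶜ), h]
      simp
    linarith
  have hμS : 1 - ε / δ ≤ (μ S).toReal := by rw [hScompl_fin]; linarith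
  -- bound set-integrals
  have hISlb : c / 2 * (1 - ε / δ) ≤ ∫ θ in S, L θ ∂μ := by
    calc c / 2 * (1 - ε / δ) ≤ m * (μ S).toReal := by
          apply mul_le_mul hm2 hμS (by linarith) (le_trans (by linarith) hm2)
      _ = ∫ θ in S, (fun _ => m) θ ∂μ := by
          rw [setIntegral_const, smul_eq_mul, mul_comm, measureReal_def]
      _ ≤ ∫ θ in S, L θ ∂μ := by
          refine setIntegral_mono_on (integrableOn_const (measure_ne_top μ S))
            hLint.integrableOn hSmeas fun θ hθ => hmle θ hθ
  have hIS4 : c / 4 ≤ ∫ θ in S, L θ ∂μ := by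
    refine le_trans ?_ hISlb; nlinarith
  have hIcub : ∫ θ in Sᶜ, L θ ∂μ ≤ C * (ε / δ) := by
    calc ∫ θ in Sᶜ, L θ ∂μ ≤ ∫ θ in Sᶜ, (fun _ => C) θ ∂μ := by
          refine setIntegral_mono_on hLint.integrableOn
            (integrableOn_const (measure_ne_top μ Sᶜ)) hSmeas.compl
            fun θ _ => hC θ
      _ = (μ Sᶜ).toReal * C := by rw [setIntegral_const, smul_eq_mul, measureReal_def]
      _ ≤ C * (ε / δ) := by
          rw [mul_comm]; exact mul_le_mul_of_nonneg_left hcompl hC0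
  have hIc0 : 0 ≤ ∫ θ in Sᶜ, L θ ∂μ :=
    setIntegral_nonneg hSmeas.compl fun θ _ => hL_nonneg θ
  have hIsplit : ∫ θ in S, L θ ∂μ + ∫ θ in Sᶜ, L θ ∂μ = ∫ θ, L θ ∂μ :=
    integral_add_compl hSmeas hLint
  have hIpos : 0 < ∫ θ, L θ ∂μ := by rw [← hIsplit]; linarith [hIS4, hIc0, hc]
  have hJS : (fmax - δ) * ∫ θ in S, L θ ∂μ ≤ ∫ θ in S, f θ * L θ ∂μ := by
    calc (fmax - δ) * ∫ θ in S, L θ ∂μ = ∫ θ in S, (fmax - δ) * L θ ∂μ := by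
          rw [integral_const_mul]
      _ ≤ ∫ θ in S, f θ * L θ ∂μ := by
          refine setIntegral_mono_on (hLint.integrableOn.const_mul _)
            hfLint.integrableOn hSmeas fun θ hθ => ?_
          exact mul_le_mul_of_nonneg_right hθ (hL_nonneg θ)
  have hJfull : ∫ θ in S, f θ * L θ ∂μ ≤ ∫ θ, f θ * L θ ∂μ :=
    setIntegral_le_integral hfLint
      (Eventually.of_forall fun θ => mul_nonneg (hf_nonneg θ) (hL_nonneg θ))
  -- the key inequality
  have hkey : (fmax - η) * ∫ θ, L θ ∂μ ≤ ∫ θ, f θ * L θ ∂μ := by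
    rcases le_or_gt fmax η with hcase | hcase
    · have : (fmax - η) * ∫ θ, L θ ∂μ ≤ 0 :=
        mul_nonpos_of_nonpos_of_nonneg (by linarith) hIpos.le
      refine le_trans this (le_trans ?_ hJfull)
      exact setIntegral_nonneg hSmeas fun θ _ =>
        mul_nonneg (hf_nonneg θ) (hL_nonneg θ)
    · have hkey2 : (fmax - η) * ∫ θ in Sᶜ, L θ ∂μ ≤ (η - δ) * ∫ θ in S, L θ ∂μ := by
        calc (fmax - η) * ∫ θ in Sᶜ, L θ ∂μ ≤ fmax * (C * (ε / δ)) := by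
              apply mul_le_mul (by linarith) hIcub hIc0 hfmax0
          _ ≤ (fmax * C + 1) * (ε / δ) := by
              have : 0 ≤ ε / δ := by positivity
              nlinarith
          _ ≤ η * c / 8 := hε2
          _ ≤ (η - δ) * (c / 4) := by nlinarith
          _ ≤ (η - δ) * ∫ θ in S, L θ ∂μ :=
              mul_le_mul_of_nonneg_left hIS4 (by linarith)
      calc (fmax - η) * ∫ θ, L θ ∂μ
          = (fmax - η) * ∫ θ in S, L θ ∂μ + (fmax - η) * ∫ θ in Sᶜ, L θ ∂μ := by
            rw [← mul_add, hIsplit]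
        _ ≤ (fmax - η) * ∫ θ in S, L θ ∂μ + (η - δ) * ∫ θ in S, L θ ∂μ := by
            linarith
        _ = (fmax - δ) * ∫ θ in S, L θ ∂μ := by ring
        _ ≤ ∫ θ in S, f θ * L θ ∂μ := hJS
        _ ≤ ∫ θ, f θ * L θ ∂μ := hJfull
  -- conclude
  have hmem : (∫ θ, f θ * L θ ∂μ) / (∫ θ, L θ ∂μ) ∈ A :=
    ⟨μ, hμM, hIpos, rfl⟩
  have hAbdd : BddAbove A := ⟨fmax, hub⟩
  refine le_trans ?_ (le_csSup hAbdd hmem)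
  rw [le_div_iff₀ hIpos]
  exact hkey
end

section
/- Let Θ be the standard simplex in ℝ^k, let n'₁, …, n'_k be nonnegative integers with N' = Σ_i n'_i > 0, let g(θ) = ∏_{i=1}^k θ_i^{n'_i}, and let f' = (n'₁/N', …, n'_k/N') ∈ Θ. Let M be a nonempty set of Borel probability measures on Θ and let L : Θ → ℝ be a nonnegative bounded measurable likelihood that is continuous on some neighborhood of f' (relative to Θ) and satisfies L(f') > 0. If the prior upper predictive probability is vacuous, i.e. sup_{μ∈M} ∫_Θ g dμ = ∏_{i=1}^k (n'_i/N')^{n'_i}, then the posterior upper predictive probability is vacuous too: sup{ (∫_Θ g·L dμ)/(∫_Θ L dμ) : μ ∈ M, ∫_Θ L dμ > 0 } = ∏_{i=1}^k (n'_i/N')^{n'_i}. -/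
open MeasureTheory Filter Topology Finset

section AMGM

variable {k : ℕ} {n' : Fin k → ℕ}

private lemma sum_w_eq (hN : 0 < ∑ i, n' i) :
    ∑ i, ((n' i : ℝ) / ((∑ j, n' j : ℕ) : ℝ)) = 1 := by
  rw [← Finset.sum_div, div_eq_one_iff_eq]
  · push_cast; ring
  · exact_mod_cast hN.ne'

private lemma amgm_eq (hN : 0 < ∑ i, n' i) (θ : Fin k → ℝ) (hθ : ∀ i, 0 ≤ θ i) :
    (∏ i, θ i ^ n' i)
      = (∏ i, ((n' i : ℝ) / ((∑ j, n' j : ℕ) : ℝ)) ^ n' i)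
        * (∏ i ∈ Finset.univ.filter (fun i => 0 < n' i),
            (θ i / ((n' i : ℝ) / ((∑ j, n' j : ℕ) : ℝ)))
              ^ ((n' i : ℝ) / ((∑ j, n' j : ℕ) : ℝ))) ^ (∑ j, n' j) := by
  set N := ∑ j, n' j with hNdef
  set t := Finset.univ.filter (fun i => 0 < n' i) with ht
  have hNne : ((N : ℕ) : ℝ) ≠ 0 := by exact_mod_cast hN.ne'
  have hwpos : ∀ i ∈ t, 0 < (n' i : ℝ) / (N : ℝ) := by
    intro i hi
    rw [ht, Finset.mem_filter] at hi
    exact div_pos (by exact_mod_cast hi.2) (by exact_mod_cast hN)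
  have hn0 : ∀ i ∉ t, n' i = 0 := by
    intro i hi
    rw [ht, Finset.mem_filter] at hi
    push_neg at hi
    have := hi (Finset.mem_univ i)
    omega
  have h1 : (∏ i, θ i ^ n' i) = ∏ i ∈ t, θ i ^ n' i := by
    refine (Finset.prod_subset (Finset.subset_univ t) ?_).symm
    intro i _ hi
    simp [hn0 i hi]
  have h2 : (∏ i, ((n' i : ℝ) / (N : ℝ)) ^ n' i)
      = ∏ i ∈ t, ((n' i : ℝ) / (N : ℝ)) ^ n' i := by
    refine (Finset.prod_subset (Finset.subset_univ t) ?_).symm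
    intro i _ hi
    simp [hn0 i hi]
  have h3 : (∏ i ∈ t, (θ i / ((n' i : ℝ) / (N : ℝ))) ^ ((n' i : ℝ) / (N : ℝ))) ^ (N : ℕ)
      = ∏ i ∈ t, (θ i / ((n' i : ℝ) / (N : ℝ))) ^ n' i := by
    rw [← Finset.prod_pow]
    refine Finset.prod_congr rfl ?_
    intro i hi
    have hz : 0 ≤ θ i / ((n' i : ℝ) / (N : ℝ)) := div_nonneg (hθ i) (hwpos i hi).le
    rw [← Real.rpow_natCast ((θ i / ((n' i : ℝ) / (N : ℝ))) ^ ((n' i : ℝ) / (N : ℝ))) N,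
      ← Real.rpow_mul hz]
    have hwN : (n' i : ℝ) / (N : ℝ) * (N : ℝ) = (n' i : ℝ) := by field_simp
    rw [hwN, Real.rpow_natCast]
  rw [h1, h2, h3, ← Finset.prod_mul_distrib]
  refine Finset.prod_congr rfl ?_
  intro i hi
  rw [← mul_pow, mul_div_cancel₀ _ (hwpos i hi).ne']

end AMGM

section AMGM2

variable {k : ℕ} {n' : Fin k → ℕ}

private lemma sum_w_filter (hN : 0 < ∑ i, n' i) :
    ∑ i ∈ Finset.univ.filter (fun i => 0 < n' i),
      ((n' i : ℝ) / ((∑ j, n' j : ℕ) : ℝ)) = 1 := by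
  rw [Finset.sum_filter_of_ne, sum_w_eq hN]
  intro i _ h
  by_contra hc
  have : n' i = 0 := by omega
  simp [this] at h

private lemma P_le_one (hN : 0 < ∑ i, n' i) (θ : Fin k → ℝ)
    (hθ : θ ∈ stdSimplex ℝ (Fin k)) :
    (∏ i ∈ Finset.univ.filter (fun i => 0 < n' i),
      (θ i / ((n' i : ℝ) / ((∑ j, n' j : ℕ) : ℝ)))
        ^ ((n' i : ℝ) / ((∑ j, n' j : ℕ) : ℝ))) ≤ 1 := by
  set N := ∑ j, n' j with hNdef
  set t := Finset.univ.filter (fun i => 0 < n' i) with ht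
  have hwpos : ∀ i ∈ t, 0 < (n' i : ℝ) / (N : ℝ) := by
    intro i hi
    rw [ht, Finset.mem_filter] at hi
    exact div_pos (by exact_mod_cast hi.2) (by exact_mod_cast hN)
  calc (∏ i ∈ t, (θ i / ((n' i : ℝ) / (N : ℝ))) ^ ((n' i : ℝ) / (N : ℝ)))
      ≤ ∑ i ∈ t, ((n' i : ℝ) / (N : ℝ)) * (θ i / ((n' i : ℝ) / (N : ℝ))) :=
        Real.geom_mean_le_arith_mean_weighted t _ _
          (fun i hi => (hwpos i hi).le) (sum_w_filter hN)
          (fun i hi => div_nonneg (hθ.1 i) (hwpos i hi).le)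
    _ = ∑ i ∈ t, θ i := by
        refine Finset.sum_congr rfl fun i hi => ?_
        rw [mul_div_cancel₀ _ (hwpos i hi).ne']
    _ ≤ ∑ i, θ i := Finset.sum_le_sum_of_subset_of_nonneg (Finset.subset_univ t)
        (fun i _ _ => hθ.1 i)
    _ = 1 := hθ.2

private lemma P_lt_one (hN : 0 < ∑ i, n' i) (θ : Fin k → ℝ)
    (hθ : θ ∈ stdSimplex ℝ (Fin k))
    (hne : θ ≠ fun i => (n' i : ℝ) / ((∑ j, n' j : ℕ) : ℝ)) :
    (∏ i ∈ Finset.univ.filter (fun i => 0 < n' i),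
      (θ i / ((n' i : ℝ) / ((∑ j, n' j : ℕ) : ℝ)))
        ^ ((n' i : ℝ) / ((∑ j, n' j : ℕ) : ℝ))) < 1 := by
  set N := ∑ j, n' j with hNdef
  set t := Finset.univ.filter (fun i => 0 < n' i) with ht
  set w : Fin k → ℝ := fun i => (n' i : ℝ) / (N : ℝ) with hwdef
  have hwpos : ∀ i ∈ t, 0 < (n' i : ℝ) / (N : ℝ) := by
    intro i hi
    rw [ht, Finset.mem_filter] at hi
    exact div_pos (by exact_mod_cast hi.2) (by exact_mod_cast hN)
  by_cases hz0 : ∃ i ∈ t, θ i = 0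
  · obtain ⟨i, hi, hzi⟩ := hz0
    rw [Finset.prod_eq_zero hi]
    · exact one_pos
    · rw [hzi, zero_div, Real.zero_rpow (hwpos i hi).ne']
  · push_neg at hz0
    have hzpos : ∀ i ∈ t, 0 < θ i := fun i hi => (hθ.1 i).lt_of_ne' (hz0 i hi)
    have hS_le : ∑ i ∈ t, θ i ≤ 1 := by
      calc ∑ i ∈ t, θ i ≤ ∑ i, θ i :=
            Finset.sum_le_sum_of_subset_of_nonneg (Finset.subset_univ t)
              (fun i _ _ => hθ.1 i)
        _ = 1 := hθ.2
    have hamgm : (∏ i ∈ t, (θ i / ((n' i : ℝ) / (N : ℝ))) ^ ((n' i : ℝ) / (N : ℝ)))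
        ≤ ∑ i ∈ t, θ i := by
      calc (∏ i ∈ t, (θ i / ((n' i : ℝ) / (N : ℝ))) ^ ((n' i : ℝ) / (N : ℝ)))
          ≤ ∑ i ∈ t, ((n' i : ℝ) / (N : ℝ)) * (θ i / ((n' i : ℝ) / (N : ℝ))) :=
            Real.geom_mean_le_arith_mean_weighted t _ _
              (fun i hi => (hwpos i hi).le) (sum_w_filter hN)
              (fun i hi => div_nonneg (hθ.1 i) (hwpos i hi).le)
        _ = ∑ i ∈ t, θ i := by
            refine Finset.sum_congr rfl fun i hi => ?_
            rw [mul_div_cancel₀ _ (hwpos i hi).ne']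
    rcases lt_or_eq_of_le hS_le with hS | hS
    · exact lt_of_le_of_lt hamgm hS
    · -- sum over t equals 1; get two distinct ratios
      have hexists : ∃ j ∈ t, ∃ l ∈ t,
          θ j / ((n' j : ℝ) / (N : ℝ)) ≠ θ l / ((n' l : ℝ) / (N : ℝ)) := by
        by_contra hall
        push_neg at hall
        apply hne
        -- all ratios equal; show θ = w
        have htne : t.Nonempty := by
          rw [ht]
          obtain ⟨i, hi⟩ : ∃ i, 0 < n' i := by
            by_contra hc
            push_neg at hc
            simp only [Nat.le_zero] at hc
            rw [hNdef] at hN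
            simp [hc] at hN
          exact ⟨i, Finset.mem_filter.2 ⟨Finset.mem_univ i, hi⟩⟩
        obtain ⟨i0, hi0⟩ := htne
        set v := θ i0 / ((n' i0 : ℝ) / (N : ℝ)) with hv
        have hveq : ∀ i ∈ t, θ i = ((n' i : ℝ) / (N : ℝ)) * v := by
          intro i hi
          have h' := hall i hi i0 hi0
          rw [hv, ← h', mul_div_cancel₀ _ (hwpos i hi).ne']
        have hv1 : v = 1 := by
          have h2 : ∑ i ∈ t, θ i = v := by
            calc ∑ i ∈ t, θ i = ∑ i ∈ t, ((n' i : ℝ) / (N : ℝ)) * v :=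
                  Finset.sum_congr rfl hveq
              _ = (∑ i ∈ t, ((n' i : ℝ) / (N : ℝ))) * v := by rw [Finset.sum_mul]
              _ = v := by rw [sum_w_filter hN, one_mul]
          linarith [h2, hS]
        funext i
        by_cases hi : i ∈ t
        · rw [hveq i hi, hv1, mul_one]
        · have hni : n' i = 0 := by
            rw [ht, Finset.mem_filter] at hi
            push_neg at hi
            have := hi (Finset.mem_univ i)
            omega
          have hsum0 : ∑ i ∈ Finset.univ \ t, θ i = 0 := by
            have := Finset.sum_sdiff_eq_sub (Finset.subset_univ t) (f := θ)
            rw [hθ.2, hS] at this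
            linarith
          have hθi0 : θ i = 0 := by
            have hmem : i ∈ Finset.univ \ t := Finset.mem_sdiff.2 ⟨Finset.mem_univ i, hi⟩
            have := Finset.sum_eq_zero_iff_of_nonneg
              (fun j _ => hθ.1 j) |>.mp hsum0 i hmem
            exact this
          rw [hθi0, hwdef]
          simp [hni]
      -- strict Jensen
      obtain ⟨j, hj, l, hl, hjl⟩ := hexists
      have hlogne : Real.log (θ j / ((n' j : ℝ) / (N : ℝ)))
          ≠ Real.log (θ l / ((n' l : ℝ) / (N : ℝ))) := by
        intro hc
        apply hjl
        have hpj : 0 < θ j / ((n' j : ℝ) / (N : ℝ)) := div_pos (hzpos j hj) (hwpos j hj)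
        have hpl : 0 < θ l / ((n' l : ℝ) / (N : ℝ)) := div_pos (hzpos l hl) (hwpos l hl)
        rw [← Real.exp_log hpj, ← Real.exp_log hpl, hc]
      have hjensen := strictConvexOn_exp.map_sum_lt
          (t := t) (w := fun i => (n' i : ℝ) / (N : ℝ))
          (p := fun i => Real.log (θ i / ((n' i : ℝ) / (N : ℝ))))
          hwpos (sum_w_filter hN) (fun i _ => Set.mem_univ _)
          ⟨j, hj, l, hl, hlogne⟩
      calc (∏ i ∈ t, (θ i / ((n' i : ℝ) / (N : ℝ))) ^ ((n' i : ℝ) / (N : ℝ)))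
          = Real.exp (∑ i ∈ t, ((n' i : ℝ) / (N : ℝ)) •
              Real.log (θ i / ((n' i : ℝ) / (N : ℝ)))) := by
            rw [Real.exp_sum]
            refine Finset.prod_congr rfl fun i hi => ?_
            rw [Real.rpow_def_of_pos (div_pos (hzpos i hi) (hwpos i hi)), smul_eq_mul,
              mul_comm]
        _ < ∑ i ∈ t, ((n' i : ℝ) / (N : ℝ)) •
              Real.exp (Real.log (θ i / ((n' i : ℝ) / (N : ℝ)))) := hjensen
        _ = ∑ i ∈ t, θ i := by
            refine Finset.sum_congr rfl fun i hi => ?_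
            rw [Real.exp_log (div_pos (hzpos i hi) (hwpos i hi)), smul_eq_mul,
              mul_div_cancel₀ _ (hwpos i hi).ne']
        _ = 1 := hS

end AMGM2

section Derived

variable {k : ℕ} {n' : Fin k → ℕ}

private lemma c_pos (hN : 0 < ∑ i, n' i) :
    0 < ∏ i, ((n' i : ℝ) / ((∑ j, n' j : ℕ) : ℝ)) ^ n' i := by
  apply Finset.prod_pos
  intro i _
  rcases Nat.eq_zero_or_pos (n' i) with h | h
  · simp [h]
  · exact pow_pos (div_pos (by exact_mod_cast h) (by exact_mod_cast hN)) _

private lemma P_nonneg (hN : 0 < ∑ i, n' i) (θ : Fin k → ℝ) (hθ : ∀ i, 0 ≤ θ i) :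
    0 ≤ ∏ i ∈ Finset.univ.filter (fun i => 0 < n' i),
      (θ i / ((n' i : ℝ) / ((∑ j, n' j : ℕ) : ℝ)))
        ^ ((n' i : ℝ) / ((∑ j, n' j : ℕ) : ℝ)) := by
  apply Finset.prod_nonneg
  intro i hi
  apply Real.rpow_nonneg
  apply div_nonneg (hθ i)
  positivity

private lemma g_le (hN : 0 < ∑ i, n' i) (θ : Fin k → ℝ) (hθ : θ ∈ stdSimplex ℝ (Fin k)) :
    (∏ i, θ i ^ n' i) ≤ ∏ i, ((n' i : ℝ) / ((∑ j, n' j : ℕ) : ℝ)) ^ n' i := by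
  rw [amgm_eq hN θ hθ.1]
  have h1 := P_le_one hN θ hθ
  have h0 := P_nonneg hN θ hθ.1
  calc _ ≤ (∏ i, ((n' i : ℝ) / ((∑ j, n' j : ℕ) : ℝ)) ^ n' i) * 1 := by
        exact mul_le_mul_of_nonneg_left (pow_le_one₀ h0 h1) (c_pos hN).le
    _ = _ := mul_one _

private lemma g_lt (hN : 0 < ∑ i, n' i) (θ : Fin k → ℝ) (hθ : θ ∈ stdSimplex ℝ (Fin k))
    (hne : θ ≠ fun i => (n' i : ℝ) / ((∑ j, n' j : ℕ) : ℝ)) :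
    (∏ i, θ i ^ n' i) < ∏ i, ((n' i : ℝ) / ((∑ j, n' j : ℕ) : ℝ)) ^ n' i := by
  rw [amgm_eq hN θ hθ.1]
  have h1 := P_lt_one hN θ hθ hne
  have h0 := P_nonneg hN θ hθ.1
  calc _ < (∏ i, ((n' i : ℝ) / ((∑ j, n' j : ℕ) : ℝ)) ^ n' i) * 1 := by
        apply mul_lt_mul_of_pos_left _ (c_pos hN)
        exact pow_lt_one₀ h0 h1 hN.ne'
    _ = _ := mul_one _

end Derived

set_option maxHeartbeats 2000000 in
/-- **Corollary 1.**
Let `Θ` be the standard simplex in `ℝ^k`, `n'₁, …, n'_k` nonnegative integers with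
`N' = Σᵢ n'ᵢ > 0`, `g θ = ∏ᵢ θᵢ ^ n'ᵢ`, and `f' = (n'₁/N', …, n'_k/N') ∈ Θ`.  Let
`M` be a nonempty set of Borel probability measures on `Θ` and `L : Θ → ℝ` a
nonnegative bounded measurable likelihood, continuous on some neighborhood of `f'`
(relative to `Θ`) with `L f' > 0`.  If the prior upper predictive probability is
vacuous, `sup_{μ∈M} ∫ g dμ = ∏ᵢ (n'ᵢ/N') ^ n'ᵢ`, then so is the posterior one:
`sup { (∫ g·L dμ)/(∫ L dμ) | μ ∈ M, ∫ L dμ > 0 } = ∏ᵢ (n'ᵢ/N') ^ n'ᵢ`. -/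
theorem vacuous_posterior_upper_predictive
    (k : ℕ) (n' : Fin k → ℕ) (hN' : 0 < ∑ i, n' i)
    (hf' : (fun i => (n' i : ℝ) / ((∑ j, n' j : ℕ) : ℝ)) ∈ stdSimplex ℝ (Fin k))
    (M : Set (Measure (stdSimplex ℝ (Fin k))))
    (hM : M.Nonempty)
    (hMprob : ∀ μ ∈ M, IsProbabilityMeasure μ)
    (L : stdSimplex ℝ (Fin k) → ℝ)
    (hL_nonneg : ∀ θ, 0 ≤ L θ)
    (hL_bdd : ∃ C, ∀ θ, L θ ≤ C)
    (hL_meas : Measurable L)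
    (hL_cont : ∃ U ∈ 𝓝 (⟨_, hf'⟩ : stdSimplex ℝ (Fin k)), ContinuousOn L U)
    (hL_pos : 0 < L ⟨_, hf'⟩)
    (hprior : sSup {r | ∃ μ ∈ M, r = ∫ θ, ∏ i, (θ : Fin k → ℝ) i ^ n' i ∂μ}
        = ∏ i, ((n' i : ℝ) / ((∑ j, n' j : ℕ) : ℝ)) ^ n' i) :
    sSup {r | ∃ μ ∈ M, 0 < ∫ θ, L θ ∂μ ∧
        r = (∫ θ, (∏ i, (θ : Fin k → ℝ) i ^ n' i) * L θ ∂μ) / (∫ θ, L θ ∂μ)}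
      = ∏ i, ((n' i : ℝ) / ((∑ j, n' j : ℕ) : ℝ)) ^ n' i := by
  classical
  set f' : stdSimplex ℝ (Fin k) := (⟨_, hf'⟩ : stdSimplex ℝ (Fin k)) with hf'def
  set g : stdSimplex ℝ (Fin k) → ℝ := fun θ => ∏ i, (θ : Fin k → ℝ) i ^ n' i with hgdef
  set c : ℝ := ∏ i, ((n' i : ℝ) / ((∑ j, n' j : ℕ) : ℝ)) ^ n' i with hcdef
  have hc : 0 < c := c_pos hN'
  have hgle : ∀ θ : stdSimplex ℝ (Fin k), g θ ≤ c := fun θ => g_le hN' θ.1 θ.2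
  have hglt : ∀ θ : stdSimplex ℝ (Fin k), θ ≠ f' → g θ < c := fun θ hθ =>
    g_lt hN' θ.1 θ.2 (fun h => hθ (Subtype.ext h))
  have hg0 : ∀ θ : stdSimplex ℝ (Fin k), 0 ≤ g θ := fun θ =>
    Finset.prod_nonneg fun i _ => pow_nonneg (θ.2.1 i) _
  have hgcont : Continuous g :=
    continuous_finset_prod Finset.univ fun i _ =>
      ((continuous_apply i).comp continuous_subtype_val).pow (n' i)
  have hgf' : g f' = c := rfl
  have hg_meas : Measurable g := hgcont.measurable
  -- bound for L
  obtain ⟨C₀, hC₀⟩ := hL_bdd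
  set C : ℝ := max C₀ (L f') with hCdef
  have hC : ∀ θ, L θ ≤ C := fun θ => le_trans (hC₀ θ) (le_max_left _ _)
  have hCpos : 0 < C := lt_of_lt_of_le hL_pos (le_max_right _ _)
  set a : ℝ := L f' / 2 with hadef
  have ha : 0 < a := by positivity
  -- integrability facts
  have hLint : ∀ μ : Measure (stdSimplex ℝ (Fin k)), IsProbabilityMeasure μ → Integrable L μ := by
    intro μ hμ
    refine Integrable.mono' (integrable_const C) hL_meas.aestronglyMeasurable
      (Filter.Eventually.of_forall fun θ => ?_)
    rw [Real.norm_eq_abs, abs_of_nonneg (hL_nonneg θ)]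
    exact hC θ
  have hgint : ∀ μ : Measure (stdSimplex ℝ (Fin k)), IsProbabilityMeasure μ → Integrable g μ := by
    intro μ hμ
    refine Integrable.mono' (integrable_const c) hg_meas.aestronglyMeasurable
      (Filter.Eventually.of_forall fun θ => ?_)
    rw [Real.norm_eq_abs, abs_of_nonneg (hg0 θ)]
    exact hgle θ
  have hgLint : ∀ μ : Measure (stdSimplex ℝ (Fin k)), IsProbabilityMeasure μ →
      Integrable (fun θ => g θ * L θ) μ := by
    intro μ hμ
    refine Integrable.mono' (integrable_const (c * C))
      (hg_meas.mul hL_meas).aestronglyMeasurable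
      (Filter.Eventually.of_forall fun θ => ?_)
    rw [Real.norm_eq_abs, abs_of_nonneg (mul_nonneg (hg0 θ) (hL_nonneg θ))]
    exact mul_le_mul (hgle θ) (hC θ) (hL_nonneg θ) hc.le
  -- upper bound for elements of the posterior set
  set S := {r | ∃ μ ∈ M, 0 < ∫ θ, L θ ∂μ ∧
      r = (∫ θ, g θ * L θ ∂μ) / (∫ θ, L θ ∂μ)} with hSdef
  have hub : ∀ r ∈ S, r ≤ c := by
    rintro r ⟨μ, hμM, hLpos', rfl⟩
    haveI := hMprob μ hμM
    rw [div_le_iff₀ hLpos']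
    calc (∫ θ, g θ * L θ ∂μ) ≤ ∫ θ, c * L θ ∂μ := by
          refine integral_mono (hgLint μ inferInstance)
            ((hLint μ inferInstance).const_mul c) fun θ => ?_
          exact mul_le_mul_of_nonneg_right (hgle θ) (hL_nonneg θ)
      _ = c * ∫ θ, L θ ∂μ := integral_const_mul _ _
  -- lower bound: for each ε > 0 find an element of S exceeding c - ε
  have hlow : ∀ ε : ℝ, 0 < ε → ∃ r ∈ S, c - ε < r := by
    intro ε hε
    set η : ℝ := min (ε / 2) (c / 2) with hηdef
    have hηpos : 0 < η := lt_min (by linarith) (by linarith)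
    have hη1 : η ≤ ε / 2 := min_le_left _ _
    have hη2 : η ≤ c / 2 := min_le_right _ _
    -- neighborhood where L > a and g > c - η
    obtain ⟨U, hU, hUcont⟩ := hL_cont
    have hLc : ContinuousAt L f' := hUcont.continuousAt hU
    have hA1 : L ⁻¹' Set.Ioi a ∈ 𝓝 f' := hLc (Ioi_mem_nhds (by rw [hadef]; linarith))
    have hA2 : g ⁻¹' Set.Ioi (c - η) ∈ 𝓝 f' :=
      hgcont.continuousAt (Ioi_mem_nhds (by rw [hgf']; linarith))
    obtain ⟨O, hOsub, hOopen, hOf⟩ := mem_nhds_iff.mp (Filter.inter_mem hA1 hA2)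
    have hOmeas : MeasurableSet O := hOopen.measurableSet
    -- gap on the complement of O
    obtain ⟨δ, hδpos, hδ⟩ : ∃ δ : ℝ, 0 < δ ∧ ∀ θ ∈ Oᶜ, g θ ≤ c - δ := by
      rcases Set.eq_empty_or_nonempty Oᶜ with hK | hK
      · exact ⟨c, hc, fun θ hθ => absurd (hK ▸ hθ) (Set.notMem_empty θ)⟩
      · have hKcomp : IsCompact Oᶜ := hOopen.isClosed_compl.isCompact
        obtain ⟨θ₀, hθ₀K, hmax⟩ := hKcomp.exists_isMaxOn hK hgcont.continuousOn
        have hθ₀ne : θ₀ ≠ f' := fun h => hθ₀K (h ▸ hOf)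
        refine ⟨c - g θ₀, by linarith [hglt θ₀ hθ₀ne], fun θ hθ => ?_⟩
        have h2 := isMaxOn_iff.mp hmax θ hθ
        linarith [h2]
    set κ : ℝ := δ * min (1 / 2) (a * ε / (8 * c * C)) with hκdef
    have hκpos : 0 < κ := by
      apply mul_pos hδpos
      apply lt_min (by norm_num)
      positivity
    -- choose μ with ∫ g close to c
    have hSpre_ne : {r | ∃ μ ∈ M, r = ∫ θ, g θ ∂μ}.Nonempty := by
      obtain ⟨μ₀, hμ₀⟩ := hM
      exact ⟨_, μ₀, hμ₀, rfl⟩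
    have hlt : c - κ < sSup {r | ∃ μ ∈ M, r = ∫ θ, g θ ∂μ} := by
      rw [hprior]; linarith
    obtain ⟨r₀, ⟨μ, hμM, hr₀⟩, hr₀lt⟩ := exists_lt_of_lt_csSup hSpre_ne hlt
    haveI := hMprob μ hμM
    have hgi := hgint μ inferInstance
    have hLi := hLint μ inferInstance
    have hgLi := hgLint μ inferInstance
    have hint_g : c - κ < ∫ θ, g θ ∂μ := hr₀ ▸ hr₀lt
    set t' : ℝ := (μ Oᶜ).toReal with ht'def
    have ht'0 : 0 ≤ t' := ENNReal.toReal_nonneg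
    have hmsum : (μ O).toReal + t' = 1 := by
      rw [ht'def, ← ENNReal.toReal_add (measure_ne_top μ O) (measure_ne_top μ Oᶜ),
        measure_add_measure_compl hOmeas]
      simp
    have hmO : (μ O).toReal = 1 - t' := by linarith
    -- concentration: δ * t' < κ
    have hconc : δ * t' < κ := by
      have h1 : ∫ θ in O, g θ ∂μ ≤ c * (1 - t') := by
        calc ∫ θ in O, g θ ∂μ ≤ ∫ _ in O, c ∂μ :=
              setIntegral_mono_on hgi.integrableOn
                (integrable_const c).integrableOn hOmeas (fun θ _ => hgle θ)
          _ = (μ O).toReal • c := setIntegral_const c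
          _ = c * (1 - t') := by rw [hmO, smul_eq_mul]; ring
      have h2 : ∫ θ in Oᶜ, g θ ∂μ ≤ (c - δ) * t' := by
        calc ∫ θ in Oᶜ, g θ ∂μ ≤ ∫ _ in Oᶜ, (c - δ) ∂μ :=
              setIntegral_mono_on hgi.integrableOn
                (integrable_const _).integrableOn hOmeas.compl (fun θ hθ => hδ θ hθ)
          _ = (μ Oᶜ).toReal • (c - δ) := setIntegral_const _
          _ = (c - δ) * t' := by rw [smul_eq_mul]; ring
      have h3 : ∫ θ, g θ ∂μ = (∫ θ in O, g θ ∂μ) + ∫ θ in Oᶜ, g θ ∂μ :=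
        (integral_add_compl hOmeas hgi).symm
      have := hint_g
      rw [h3] at this
      nlinarith
    have ht'bound : t' < min (1 / 2) (a * ε / (8 * c * C)) := by
      rw [hκdef] at hconc
      exact lt_of_mul_lt_mul_left hconc hδpos.le
    have ht'half : t' < 1 / 2 := lt_of_lt_of_le ht'bound (min_le_left _ _)
    have h8 : 8 * c * C * t' < a * ε := by
      have h := lt_of_lt_of_le ht'bound (min_le_right _ _)
      rw [lt_div_iff₀ (by positivity : (0:ℝ) < 8 * c * C)] at h
      linarith
    -- lower bound on ∫_O L
    set I : ℝ := ∫ θ in O, L θ ∂μ with hIdef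
    have hI : a * (1 - t') ≤ I := by
      rw [← hmO]
      refine setIntegral_ge_of_const_le_real hOmeas (measure_ne_top μ O)
        (fun θ hθ => ?_) hLi.integrableOn
      exact le_of_lt (Set.mem_Ioi.mp (hOsub hθ).1)
    have h1t' : 0 < 1 - t' := by linarith
    have hIpos : 0 < I := lt_of_lt_of_le (mul_pos ha h1t') hI
    -- ∫ L > 0 and upper bound
    have hLcompl_nonneg : 0 ≤ ∫ θ in Oᶜ, L θ ∂μ :=
      setIntegral_nonneg hOmeas.compl fun θ _ => hL_nonneg θ
    have hLcompl_ub : ∫ θ in Oᶜ, L θ ∂μ ≤ C * t' := by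
      calc ∫ θ in Oᶜ, L θ ∂μ ≤ ∫ _ in Oᶜ, C ∂μ :=
            setIntegral_mono_on hLi.integrableOn
              (integrable_const _).integrableOn hOmeas.compl (fun θ _ => hC θ)
        _ = (μ Oᶜ).toReal • C := setIntegral_const _
        _ = C * t' := by rw [smul_eq_mul]; ring
    have hLsplit : ∫ θ, L θ ∂μ = I + ∫ θ in Oᶜ, L θ ∂μ :=
      (integral_add_compl hOmeas hLi).symm
    have hLpos' : 0 < ∫ θ, L θ ∂μ := by rw [hLsplit]; linarith
    have hLub : ∫ θ, L θ ∂μ ≤ I + C * t' := by rw [hLsplit]; linarith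
    -- lower bound on ∫ g L
    have hgL_O : (c - η) * I ≤ ∫ θ in O, g θ * L θ ∂μ := by
      calc (c - η) * I = ∫ θ in O, (c - η) * L θ ∂μ := (integral_const_mul _ _).symm
        _ ≤ ∫ θ in O, g θ * L θ ∂μ := by
            refine setIntegral_mono_on ((hLi.const_mul (c - η)).integrableOn)
              hgLi.integrableOn hOmeas (fun θ hθ => ?_)
            exact mul_le_mul_of_nonneg_right ((hOsub hθ).2 : c - η < g θ).le
              (hL_nonneg θ)
    have hgL_compl : 0 ≤ ∫ θ in Oᶜ, g θ * L θ ∂μ :=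
      setIntegral_nonneg hOmeas.compl fun θ _ => mul_nonneg (hg0 θ) (hL_nonneg θ)
    have hgLlow : (c - η) * I ≤ ∫ θ, g θ * L θ ∂μ := by
      rw [(integral_add_compl hOmeas hgLi).symm]
      linarith
    -- conclude
    refine ⟨_, ⟨μ, hμM, hLpos', rfl⟩, ?_⟩
    rw [lt_div_iff₀ hLpos']
    have key : (c - ε) * (∫ θ, L θ ∂μ) < (c - η) * I := by
      rcases le_or_gt c ε with hce | hce
      · have h1 : (c - ε) * (∫ θ, L θ ∂μ) ≤ 0 :=
          mul_nonpos_of_nonpos_of_nonneg (by linarith) hLpos'.le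
        have h2 : 0 < (c - η) * I := mul_pos (by linarith) hIpos
        linarith
      · calc (c - ε) * (∫ θ, L θ ∂μ) ≤ (c - ε) * (I + C * t') :=
              mul_le_mul_of_nonneg_left hLub (by linarith)
          _ < (c - η) * I := by
              have hh2 : 0 ≤ ε * (C * t') := mul_nonneg hε.le (mul_nonneg hCpos.le ht'0)
              have hh6 : 0 < a * ε := mul_pos ha hε
              have e1 : (ε - η) * (a * (1 - t')) ≤ (ε - η) * I :=
                mul_le_mul_of_nonneg_left hI (by linarith)
              have e2 : (ε / 2) * (a * (1 - t')) ≤ (ε - η) * (a * (1 - t')) :=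
                mul_le_mul_of_nonneg_right (by linarith)
                  (mul_nonneg ha.le (by linarith))
              have e3 : (ε / 2) * (a * (1 / 2)) ≤ (ε / 2) * (a * (1 - t')) := by
                refine mul_le_mul_of_nonneg_left ?_ (by linarith)
                exact mul_le_mul_of_nonneg_left (by linarith) ha.le
              have e4 : (c - ε) * (C * t') ≤ c * (C * t') :=
                mul_le_mul_of_nonneg_right (by linarith) (mul_nonneg hCpos.le ht'0)
              have e5 : c * (C * t') < a * ε / 8 := by linarith [h8]
              linarith [e1, e2, e3, e4, e5, hh2, hh6]
    linarith
  -- combine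
  apply le_antisymm
  · exact Real.sSup_le hub hc.le
  · have hbdd : BddAbove S := ⟨c, fun r hr => hub r hr⟩
    by_contra hcon
    push_neg at hcon
    obtain ⟨r, hrS, hrlt⟩ := hlow (c - sSup S) (by linarith)
    have : r ≤ sSup S := le_csSup hbdd hrS
    linarith
end

section
/- Let Θ be the standard simplex in ℝ^k, let n'₁, …, n'_k be nonnegative integers with N' = Σ_i n'_i > 0 and let g(θ) = ∏_{i=1}^k θ_i^{n'_i}. Let M be a nonempty set of Borel probability measures on Θ and let L : Θ → ℝ be a nonnegative bounded measurable likelihood that is continuous on Θ and satisfies L(θ) > 0 for every θ ∈ Θ having θ_i = 0 for at least one index i with n'_i > 0 (i.e. L is positive on the zero set of g). If the prior lower predictive probability is vacuous, i.e. inf_{μ∈M} ∫_Θ g dμ = 0, then the posterior lower predictive probability is vacuous too: inf{ (∫_Θ g·L dμ)/(∫_Θ L dμ) : μ ∈ M, ∫_Θ L dμ > 0 } = 0. -/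
open MeasureTheory Filter Topology

/-- **Corollary 2.**
Let `Θ` be the standard simplex in `ℝ^k`, `n'₁, …, n'_k` nonnegative integers with
`N' = Σᵢ n'ᵢ > 0`, and `g θ = ∏ᵢ θᵢ ^ n'ᵢ`.  Let `M` be a nonempty set of Borel
probability measures on `Θ` and `L : Θ → ℝ` a nonnegative bounded measurable
likelihood, continuous on `Θ`, with `L θ > 0` for every `θ ∈ Θ` having `θᵢ = 0` for
at least one `i` with `n'ᵢ > 0` (i.e. positive on the zero set of `g`).  If the
prior lower predictive probability is vacuous, `inf_{μ∈M} ∫ g dμ = 0`, then so is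
the posterior one: `inf { (∫ g·L dμ)/(∫ L dμ) | μ ∈ M, ∫ L dμ > 0 } = 0`. -/
theorem vacuous_posterior_lower_predictive
    (k : ℕ) (n' : Fin k → ℕ) (hN' : 0 < ∑ i, n' i)
    (M : Set (Measure (stdSimplex ℝ (Fin k))))
    (hM : M.Nonempty)
    (hMprob : ∀ μ ∈ M, IsProbabilityMeasure μ)
    (L : stdSimplex ℝ (Fin k) → ℝ)
    (hL_nonneg : ∀ θ, 0 ≤ L θ)
    (hL_bdd : ∃ C, ∀ θ, L θ ≤ C)
    (hL_meas : Measurable L)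
    (hL_cont : Continuous L)
    (hL_pos : ∀ θ : stdSimplex ℝ (Fin k),
        (∃ i, 0 < n' i ∧ (θ : Fin k → ℝ) i = 0) → 0 < L θ)
    (hprior : sInf {r | ∃ μ ∈ M, r = ∫ θ, ∏ i, (θ : Fin k → ℝ) i ^ n' i ∂μ} = 0) :
    sInf {r | ∃ μ ∈ M, 0 < ∫ θ, L θ ∂μ ∧
        r = (∫ θ, (∏ i, (θ : Fin k → ℝ) i ^ n' i) * L θ ∂μ) / (∫ θ, L θ ∂μ)} = 0 := by
  classical
  set g : stdSimplex ℝ (Fin k) → ℝ := fun θ => ∏ i, (θ : Fin k → ℝ) i ^ n' i with hg_def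
  have hk : 0 < k := by
    rcases Nat.eq_zero_or_pos k with h | h
    · subst h; simp at hN'
    · exact h
  -- continuity and bounds of g
  have hg_cont : Continuous g := by
    apply continuous_finset_prod
    intro i _
    exact ((continuous_apply i).comp continuous_subtype_val).pow _
  have hg_nonneg : ∀ θ, 0 ≤ g θ := fun θ =>
    Finset.prod_nonneg fun i _ => pow_nonneg (θ.2.1 i) _
  have hg_le_one : ∀ θ, g θ ≤ 1 := by
    intro θ
    apply Finset.prod_le_one
    · intro i _; exact pow_nonneg (θ.2.1 i) _
    · intro i _
      apply pow_le_one₀ (θ.2.1 i)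
      calc (θ : Fin k → ℝ) i ≤ ∑ j, (θ : Fin k → ℝ) j :=
            Finset.single_le_sum (fun j _ => θ.2.1 j) (Finset.mem_univ i)
        _ = 1 := θ.2.2
  -- compactness, nonemptiness, and the positive minimum of L + g
  haveI : CompactSpace (stdSimplex ℝ (Fin k)) :=
    isCompact_iff_compactSpace.mp (isCompact_stdSimplex _ _)
  haveI : Nonempty (stdSimplex ℝ (Fin k)) :=
    ⟨⟨Pi.single ⟨0, hk⟩ 1, single_mem_stdSimplex ℝ _⟩⟩
  obtain ⟨θ0, -, hθ0⟩ := isCompact_univ.exists_isMinOn Set.univ_nonempty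
    (hL_cont.add hg_cont).continuousOn
  set c : ℝ := L θ0 + g θ0 with hc_def
  have hθ0' : ∀ θ, c ≤ L θ + g θ := fun θ => hθ0 (Set.mem_univ θ)
  have hc : 0 < c := by
    rcases eq_or_lt_of_le (hg_nonneg θ0) with h0 | h0
    · have hL0 : 0 < L θ0 := by
        apply hL_pos
        have hz : ∏ i, (θ0 : Fin k → ℝ) i ^ n' i = 0 := h0.symm
        rw [Finset.prod_eq_zero_iff] at hz
        obtain ⟨i, -, hi⟩ := hz
        rw [pow_eq_zero_iff'] at hi
        exact ⟨i, Nat.pos_of_ne_zero hi.2, hi.1⟩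
      have := hg_nonneg θ0; linarith
    · have := hL_nonneg θ0; linarith
  obtain ⟨C, hC⟩ := hL_bdd
  set C' : ℝ := max C 1 with hC'_def
  have hC'pos : (0:ℝ) < C' := lt_of_lt_of_le one_pos (le_max_right _ _)
  have hC' : ∀ θ, L θ ≤ C' := fun θ => (hC θ).trans (le_max_left _ _)
  -- the prior set
  set S : Set ℝ := {r | ∃ μ ∈ M, r = ∫ θ, g θ ∂μ} with hS_def
  obtain ⟨μ0, hμ0⟩ := hM
  have hSne : S.Nonempty := ⟨_, μ0, hμ0, rfl⟩
  -- the key step: for every ε > 0 there is an element of the posterior set below ε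
  set T : Set ℝ := {r | ∃ μ ∈ M, 0 < ∫ θ, L θ ∂μ ∧
      r = (∫ θ, g θ * L θ ∂μ) / (∫ θ, L θ ∂μ)} with hT_def
  have key : ∀ ε : ℝ, 0 < ε → ∃ r ∈ T, r < ε := by
    intro ε hε
    set ε0 : ℝ := min (c / 2) (ε * c / (2 * C')) with hε0_def
    have hε0 : 0 < ε0 := lt_min (by linarith) (by positivity)
    have : sInf S < ε0 := by rw [hprior] at *; exact hε0
    obtain ⟨r, ⟨μ, hμM, hrμ⟩, hrlt⟩ := exists_lt_of_csInf_lt hSne this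
    haveI := hMprob μ hμM
    -- integrability
    have hg_int : Integrable g μ := by
      apply (integrable_const (1:ℝ)).mono' hg_cont.aestronglyMeasurable
      filter_upwards with θ
      rw [Real.norm_eq_abs, abs_of_nonneg (hg_nonneg θ)]
      exact hg_le_one θ
    have hL_int : Integrable L μ := by
      apply (integrable_const C').mono' hL_cont.aestronglyMeasurable
      filter_upwards with θ
      rw [Real.norm_eq_abs, abs_of_nonneg (hL_nonneg θ)]
      exact hC' θ
    have hgL_int : Integrable (fun θ => g θ * L θ) μ := by
      apply (integrable_const C').mono' (hg_cont.mul hL_cont).aestronglyMeasurable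
      filter_upwards with θ
      rw [Real.norm_eq_abs, Pi.mul_apply, abs_of_nonneg (mul_nonneg (hg_nonneg θ) (hL_nonneg θ))]
      calc g θ * L θ ≤ 1 * C' :=
            mul_le_mul (hg_le_one θ) (hC' θ) (hL_nonneg θ) zero_le_one
        _ = C' := one_mul _
    have hIg_nonneg : 0 ≤ ∫ θ, g θ ∂μ := integral_nonneg hg_nonneg
    have hIg_lt : ∫ θ, g θ ∂μ < ε0 := by rw [← hrμ]; exact hrlt
    -- lower bound for ∫ L
    have hL_lb : c - ∫ θ, g θ ∂μ ≤ ∫ θ, L θ ∂μ := by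
      have h1 : ∫ θ, (c - g θ) ∂μ ≤ ∫ θ, L θ ∂μ := by
        apply integral_mono ((integrable_const c).sub hg_int) hL_int
        intro θ
        have := hθ0' θ
        simp only [Pi.sub_apply]
        linarith
      rwa [integral_sub (integrable_const c) hg_int, integral_const, probReal_univ,
        one_smul] at h1
    have hIg_lt_c2 : ∫ θ, g θ ∂μ < c / 2 := lt_of_lt_of_le hIg_lt (min_le_left _ _)
    have hLpos : c / 2 ≤ ∫ θ, L θ ∂μ := by linarith
    have hLpos' : 0 < ∫ θ, L θ ∂μ := lt_of_lt_of_le (by linarith) hLpos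
    -- upper bound for ∫ g * L
    have hgL_le : ∫ θ, g θ * L θ ∂μ ≤ C' * ∫ θ, g θ ∂μ := by
      rw [← integral_const_mul]
      apply integral_mono hgL_int (hg_int.const_mul C')
      intro θ
      calc g θ * L θ ≤ g θ * C' := mul_le_mul_of_nonneg_left (hC' θ) (hg_nonneg θ)
        _ = C' * g θ := mul_comm _ _
    refine ⟨_, ⟨μ, hμM, hLpos', rfl⟩, ?_⟩
    calc (∫ θ, g θ * L θ ∂μ) / (∫ θ, L θ ∂μ)
        ≤ (C' * ∫ θ, g θ ∂μ) / (c / 2) :=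
          div_le_div₀ (mul_nonneg hC'pos.le hIg_nonneg) hgL_le (by linarith) hLpos
      _ < ε := by
          rw [div_lt_iff₀ (by linarith)]
          have h2 : ∫ θ, g θ ∂μ < ε * c / (2 * C') :=
            lt_of_lt_of_le hIg_lt (min_le_right _ _)
          have h3 : C' * ∫ θ, g θ ∂μ < C' * (ε * c / (2 * C')) :=
            (mul_lt_mul_iff_right₀ hC'pos).mpr h2
          have h4 : C' * (ε * c / (2 * C')) = ε * (c / 2) := by
            field_simp
          linarith [h4 ▸ h3]
  -- conclude
  obtain ⟨r1, hr1T, -⟩ := key 1 one_pos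
  have hTne : T.Nonempty := ⟨r1, hr1T⟩
  have hTlb : ∀ r ∈ T, (0:ℝ) ≤ r := by
    rintro r ⟨μ, hμM, hLpos, rfl⟩
    exact div_nonneg (integral_nonneg fun θ => mul_nonneg (hg_nonneg θ) (hL_nonneg θ)) hLpos.le
  refine le_antisymm ?_ (le_csInf hTne hTlb)
  apply (Real.sInf_le_iff ⟨0, hTlb⟩ hTne).mpr
  intro ε hε
  obtain ⟨x, hxT, hx⟩ := key ε hε
  exact ⟨x, hxT, by linarith⟩
end

section
/- Let Θ be the standard simplex in ℝ^k, fix an index i, and let e^i ∈ Θ be the vertex with i-th coordinate 1 and all other coordinates 0. Let M be a nonempty set of Borel probability measures on Θ with sup_{μ∈M} ∫_Θ θ_i dμ = 1, and let L : Θ → ℝ be a nonnegative bounded measurable likelihood with L(e^i) > 0 that is continuous on some neighborhood of e^i (relative to Θ). Then sup{ (∫_Θ θ_i·L dμ)/(∫_Θ L dμ) : μ ∈ M, ∫_Θ L dμ > 0 } = 1, and consequently, for every j ≠ i, inf{ (∫_Θ θ_j·L dμ)/(∫_Θ L dμ) : μ ∈ M, ∫_Θ L dμ > 0 } = 0. 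-/
open MeasureTheory Filter Topology

set_option maxHeartbeats 1000000 in
/-- **Corollary 3.**
Let `Θ` be the standard simplex in `ℝ^k`, `i` a fixed index, and `e^i ∈ Θ` the
vertex with `i`-th coordinate `1`.  Let `M` be a nonempty set of Borel probability
measures on `Θ` with vacuous prior upper probability for outcome `i`,
`sup_{μ∈M} ∫ θᵢ dμ = 1`, and let `L : Θ → ℝ` be a nonnegative bounded measurable
likelihood with `L e^i > 0`, continuous on some neighborhood of `e^i` (relative to
`Θ`).  Then `sup { (∫ θᵢ·L dμ)/(∫ L dμ) | μ ∈ M, ∫ L dμ > 0 } = 1`, and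
consequently for every `j ≠ i`,
`inf { (∫ θⱼ·L dμ)/(∫ L dμ) | μ ∈ M, ∫ L dμ > 0 } = 0`. -/
theorem vacuous_posterior_outcome_probability
    (k : ℕ) (i : Fin k)
    (hei : (fun j => if j = i then (1 : ℝ) else 0) ∈ stdSimplex ℝ (Fin k))
    (M : Set (Measure (stdSimplex ℝ (Fin k))))
    (hM : M.Nonempty)
    (hMprob : ∀ μ ∈ M, IsProbabilityMeasure μ)
    (L : stdSimplex ℝ (Fin k) → ℝ)
    (hL_nonneg : ∀ θ, 0 ≤ L θ)
    (hL_bdd : ∃ C, ∀ θ, L θ ≤ C)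
    (hL_meas : Measurable L)
    (hL_cont : ∃ U ∈ 𝓝 (⟨_, hei⟩ : stdSimplex ℝ (Fin k)), ContinuousOn L U)
    (hL_pos : 0 < L ⟨_, hei⟩)
    (hprior : sSup {r | ∃ μ ∈ M, r = ∫ θ, (θ : Fin k → ℝ) i ∂μ} = 1) :
    sSup {r | ∃ μ ∈ M, 0 < ∫ θ, L θ ∂μ ∧
        r = (∫ θ, (θ : Fin k → ℝ) i * L θ ∂μ) / (∫ θ, L θ ∂μ)} = 1 ∧
    ∀ j, j ≠ i →
      sInf {r | ∃ μ ∈ M, 0 < ∫ θ, L θ ∂μ ∧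
          r = (∫ θ, (θ : Fin k → ℝ) j * L θ ∂μ) / (∫ θ, L θ ∂μ)} = 0 := by
  classical
  obtain ⟨C₀, hC₀⟩ := hL_bdd
  set C : ℝ := max C₀ 1 with hCdef
  have hC1 : (1:ℝ) ≤ C := le_max_right _ _
  have hCpos : (0:ℝ) < C := lt_of_lt_of_le one_pos hC1
  have hLC : ∀ θ, L θ ≤ C := fun θ => (hC₀ θ).trans (le_max_left _ _)
  set e : stdSimplex ℝ (Fin k) := ⟨_, hei⟩ with he
  set a : ℝ := L e with ha
  have hapos : 0 < a := hL_pos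
  -- continuity radius
  obtain ⟨U, hU, hcont⟩ := hL_cont
  have hca : ContinuousAt L e := hcont.continuousAt hU
  have hev : ∀ᶠ θ in 𝓝 e, a/2 < L θ := hca.eventually (eventually_gt_nhds (half_lt_self hapos))
  obtain ⟨δ, hδpos, hδ⟩ := Metric.eventually_nhds_iff.1 hev
  -- coordinate facts
  have hθ0 : ∀ (θ : stdSimplex ℝ (Fin k)) (j : Fin k), 0 ≤ (θ : Fin k → ℝ) j := fun θ j => θ.2.1 j
  have hθ1 : ∀ (θ : stdSimplex ℝ (Fin k)) (j : Fin k), (θ : Fin k → ℝ) j ≤ 1 := by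
    intro θ j
    calc (θ : Fin k → ℝ) j ≤ ∑ l, (θ : Fin k → ℝ) l :=
          Finset.single_le_sum (fun l _ => θ.2.1 l) (Finset.mem_univ j)
      _ = 1 := θ.2.2
  have hθpair : ∀ (θ : stdSimplex ℝ (Fin k)) (j : Fin k), j ≠ i →
      (θ : Fin k → ℝ) j ≤ 1 - (θ : Fin k → ℝ) i := by
    intro θ j hij
    have h : (θ : Fin k → ℝ) i + (θ : Fin k → ℝ) j ≤ ∑ l, (θ : Fin k → ℝ) l := by
      rw [← Finset.sum_pair (Ne.symm hij)]
      exact Finset.sum_le_sum_of_subset_of_nonneg (Finset.subset_univ _) (fun l _ _ => θ.2.1 l)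
    rw [stdSimplex.sum_eq_one θ] at h; linarith
  have hdist : ∀ θ : stdSimplex ℝ (Fin k), dist θ e ≤ 1 - (θ : Fin k → ℝ) i := by
    intro θ
    have h1 : 0 ≤ 1 - (θ : Fin k → ℝ) i := by linarith [hθ1 θ i]
    rw [Subtype.dist_eq]
    change dist (θ : Fin k → ℝ) (e : Fin k → ℝ) ≤ _
    refine (dist_pi_le_iff h1).2 fun j => ?_
    by_cases hj : j = i
    · subst hj
      have : (e : Fin k → ℝ) j = 1 := by show (if j = j then (1:ℝ) else 0) = 1; simp
      rw [this, Real.dist_eq, abs_of_nonpos (by linarith [hθ1 θ j])]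
      linarith
    · have : (e : Fin k → ℝ) j = 0 := by show (if j = i then (1:ℝ) else 0) = 0; simp [hj]
      rw [this, Real.dist_eq, sub_zero, abs_of_nonneg (hθ0 θ j)]
      exact hθpair θ j hj
  -- measurability
  have mi : ∀ j : Fin k, Measurable fun θ : stdSimplex ℝ (Fin k) => (θ : Fin k → ℝ) j :=
    fun j => (measurable_pi_apply j).comp measurable_subtype_coe
  -- integrability
  have nb : ∀ x : ℝ, 0 ≤ x → x ≤ C → ‖x‖ ≤ C := fun x h1 h2 => by
    rw [Real.norm_eq_abs, abs_of_nonneg h1]; exact h2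
  have intgr : ∀ μ ∈ M, ∀ f : stdSimplex ℝ (Fin k) → ℝ, Measurable f →
      (∀ θ, ‖f θ‖ ≤ C) → Integrable f μ := by
    intro μ hμ f hf hb
    haveI := hMprob μ hμ
    exact (integrable_const C).mono' hf.aestronglyMeasurable (ae_of_all _ hb)
  have intL : ∀ μ ∈ M, Integrable L μ := fun μ hμ =>
    intgr μ hμ L hL_meas fun θ => nb _ (hL_nonneg θ) (hLC θ)
  have intco : ∀ μ ∈ M, ∀ j, Integrable (fun θ : stdSimplex ℝ (Fin k) => (θ : Fin k → ℝ) j) μ :=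
    fun μ hμ j => intgr μ hμ _ (mi j) fun θ => nb _ (hθ0 θ j) ((hθ1 θ j).trans hC1)
  have intjL : ∀ μ ∈ M, ∀ j, Integrable (fun θ : stdSimplex ℝ (Fin k) => (θ : Fin k → ℝ) j * L θ) μ :=
    fun μ hμ j => intgr μ hμ _ ((mi j).mul hL_meas) fun θ =>
      nb _ (mul_nonneg (hθ0 θ j) (hL_nonneg θ))
        (by nlinarith [hθ0 θ j, hθ1 θ j, hL_nonneg θ, hLC θ])
  have intg : ∀ μ ∈ M, Integrable (fun θ : stdSimplex ℝ (Fin k) => 1 - (θ : Fin k → ℝ) i) μ := by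
    intro μ hμ
    haveI := hMprob μ hμ
    exact (integrable_const 1).sub (intco μ hμ i)
  have intgL : ∀ μ ∈ M,
      Integrable (fun θ : stdSimplex ℝ (Fin k) => (1 - (θ : Fin k → ℝ) i) * L θ) μ :=
    fun μ hμ => intgr μ hμ _ ((measurable_const.sub (mi i)).mul hL_meas) fun θ =>
      nb _ (mul_nonneg (by linarith [hθ1 θ i]) (hL_nonneg θ))
        (by nlinarith [hθ0 θ i, hθ1 θ i, hL_nonneg θ, hLC θ])
  -- upper bound: ratios are ≤ 1
  have hub : ∀ μ ∈ M, (0 < ∫ θ, L θ ∂μ) →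
      (∫ θ, (θ : Fin k → ℝ) i * L θ ∂μ) / (∫ θ, L θ ∂μ) ≤ 1 := by
    intro μ hμ hpos
    rw [div_le_one hpos]
    exact integral_mono (intjL μ hμ i) (intL μ hμ)
      (fun θ => by nlinarith [hθ1 θ i, hL_nonneg θ, hθ0 θ i])
  -- key: for every ε > 0 there is μ with positive likelihood integral and ratio ≥ 1 - ε
  have key : ∀ ε : ℝ, 0 < ε → ∃ μ ∈ M, (0 < ∫ θ, L θ ∂μ) ∧
      1 - ε ≤ (∫ θ, (θ : Fin k → ℝ) i * L θ ∂μ) / (∫ θ, L θ ∂μ) := by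
    intro ε hε
    set δ0 : ℝ := min (δ/2) (ε/2) with hδ0def
    have hδ0pos : 0 < δ0 := lt_min (by linarith) (by linarith)
    have hδ0lt : δ0 < δ := lt_of_le_of_lt (min_le_left _ _) (by linarith)
    have hδ0le : δ0 ≤ ε/2 := min_le_right _ _
    set η : ℝ := min (δ0/2) (ε * a * δ0 / (8*C)) with hηdef
    have hηpos : 0 < η := lt_min (by linarith) (by positivity)
    have hS0ne : {r | ∃ μ ∈ M, r = ∫ θ, (θ : Fin k → ℝ) i ∂μ}.Nonempty :=
      ⟨_, hM.choose, hM.choose_spec, rfl⟩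
    have hlt : 1 - η < sSup {r | ∃ μ ∈ M, r = ∫ θ, (θ : Fin k → ℝ) i ∂μ} := by
      rw [hprior]; linarith
    obtain ⟨r, ⟨μ, hμM, hrμ⟩, hr⟩ := exists_lt_of_lt_csSup hS0ne hlt
    haveI := hMprob μ hμM
    refine ⟨μ, hμM, ?_⟩
    set Ii : ℝ := ∫ θ, (θ : Fin k → ℝ) i * L θ ∂μ with hIidef
    set IL : ℝ := ∫ θ, L θ ∂μ with hILdef
    set Ig : ℝ := ∫ θ, (1 - (θ : Fin k → ℝ) i) ∂μ with hIgdef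
    have hIg_eq : Ig = 1 - ∫ θ, (θ : Fin k → ℝ) i ∂μ := by
      rw [hIgdef, integral_sub (integrable_const 1) (intco μ hμM i)]
      simp
    have hIg_le : Ig ≤ η := by rw [hIg_eq]; rw [hrμ] at hr; linarith
    have hIg0 : 0 ≤ Ig := integral_nonneg fun θ => by simpa using sub_nonneg.2 (hθ1 θ i)
    -- lower bound on IL
    have hLlow : ∀ θ : stdSimplex ℝ (Fin k),
        a/2 * (1 - (1 - (θ : Fin k → ℝ) i)/δ0) ≤ L θ := by
      intro θ
      by_cases hg : 1 - (θ : Fin k → ℝ) i ≤ δ0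
      · have hd : dist θ e < δ := lt_of_le_of_lt ((hdist θ).trans hg) hδ0lt
        have hL2 : a/2 < L θ := hδ hd
        have h0 : 0 ≤ (1 - (θ : Fin k → ℝ) i)/δ0 :=
          div_nonneg (by linarith [hθ1 θ i]) hδ0pos.le
        nlinarith
      · push_neg at hg
        have h1 : (1:ℝ) < (1 - (θ : Fin k → ℝ) i)/δ0 := by
          rw [lt_div_iff₀ hδ0pos]; linarith
        nlinarith [hL_nonneg θ]
    have hIlhs : ∫ θ, a/2 * (1 - (1 - (θ : Fin k → ℝ) i)/δ0) ∂μ = a/2 * (1 - Ig/δ0) := by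
      rw [integral_const_mul]
      congr 1
      rw [integral_sub (integrable_const 1) ((intg μ hμM).div_const δ0), integral_div]
      simp [hIgdef]
    have hILlow : a/2 * (1 - Ig/δ0) ≤ IL := by
      rw [← hIlhs]
      exact integral_mono
        (((integrable_const 1).sub ((intg μ hμM).div_const δ0)).const_mul (a/2))
        (intL μ hμM) hLlow
    have hIL4 : a/4 ≤ IL := by
      have h5 : Ig ≤ δ0/2 := hIg_le.trans (min_le_left _ _)
      have h6 : Ig/δ0 ≤ 1/2 := by rw [div_le_iff₀ hδ0pos]; linarith
      nlinarith
    have hILpos : 0 < IL := lt_of_lt_of_le (by linarith) hIL4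
    refine ⟨hILpos, ?_⟩
    -- upper bound on ∫ (1-θᵢ)L
    have hgall : ∀ θ : stdSimplex ℝ (Fin k),
        (1 - (θ : Fin k → ℝ) i) * L θ ≤ δ0 * L θ + (C/δ0) * (1 - (θ : Fin k → ℝ) i) := by
      intro θ
      by_cases hg : 1 - (θ : Fin k → ℝ) i ≤ δ0
      · have h1 : (1 - (θ : Fin k → ℝ) i) * L θ ≤ δ0 * L θ :=
          mul_le_mul_of_nonneg_right hg (hL_nonneg θ)
        have h2 : 0 ≤ (C/δ0) * (1 - (θ : Fin k → ℝ) i) :=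
          mul_nonneg (div_nonneg hCpos.le hδ0pos.le) (by linarith [hθ1 θ i])
        linarith
      · push_neg at hg
        have h1 : (1 - (θ : Fin k → ℝ) i) * L θ ≤ L θ := by
          nlinarith [hL_nonneg θ, hθ0 θ i, hθ1 θ i]
        have h2 : L θ ≤ (C/δ0) * (1 - (θ : Fin k → ℝ) i) := by
          rw [div_mul_eq_mul_div, le_div_iff₀ hδ0pos]
          nlinarith [hLC θ, hL_nonneg θ]
        have h3 : 0 ≤ δ0 * L θ := mul_nonneg hδ0pos.le (hL_nonneg θ)
        linarith
    have hgL_eq : ∫ θ, (1 - (θ : Fin k → ℝ) i) * L θ ∂μ = IL - Ii := by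
      have hfun : (fun θ : stdSimplex ℝ (Fin k) => (1 - (θ : Fin k → ℝ) i) * L θ)
          = fun θ => L θ - (θ : Fin k → ℝ) i * L θ := by funext θ; ring
      rw [hfun, integral_sub (intL μ hμM) (intjL μ hμM i)]
    have hrhs : ∫ θ, (δ0 * L θ + (C/δ0) * (1 - (θ : Fin k → ℝ) i)) ∂μ
        = δ0 * IL + (C/δ0) * Ig := by
      rw [integral_add ((intL μ hμM).const_mul δ0) ((intg μ hμM).const_mul (C/δ0)),
        integral_const_mul, integral_const_mul]
    have hgLle : IL - Ii ≤ δ0 * IL + (C/δ0) * Ig := by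
      rw [← hgL_eq, ← hrhs]
      exact integral_mono (intgL μ hμM)
        (((intL μ hμM).const_mul δ0).add ((intg μ hμM).const_mul (C/δ0))) hgall
    rw [le_div_iff₀ hILpos]
    have hCd : (C/δ0) * Ig ≤ ε*a/8 := by
      calc (C/δ0) * Ig ≤ (C/δ0) * (ε * a * δ0 / (8*C)) :=
            mul_le_mul_of_nonneg_left (hIg_le.trans (min_le_right _ _))
              (div_nonneg hCpos.le hδ0pos.le)
        _ = ε*a/8 := by field_simp
    have h2 : ε*a/8 ≤ (ε - δ0) * IL := by
      have h4 := mul_le_mul (show ε/2 ≤ ε - δ0 by linarith) hIL4 (by linarith) (by linarith)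
      have h5 : ε/2 * (a/4) = ε*a/8 := by ring
      linarith
    have hx : (ε - δ0) * IL = ε * IL - δ0 * IL := by ring
    have hfin : (1 - ε) * IL = IL - ε * IL := by ring
    linarith
  constructor
  · -- sSup part
    have hSbdd : ∀ r ∈ {r | ∃ μ ∈ M, 0 < ∫ θ, L θ ∂μ ∧
        r = (∫ θ, (θ : Fin k → ℝ) i * L θ ∂μ) / (∫ θ, L θ ∂μ)}, r ≤ 1 := by
      rintro r ⟨μ, hμ, hpos, rfl⟩
      exact hub μ hμ hpos
    have hSne : ∃ μ ∈ M, (0 < ∫ θ, L θ ∂μ) ∧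
        1 - 1 ≤ (∫ θ, (θ : Fin k → ℝ) i * L θ ∂μ) / (∫ θ, L θ ∂μ) := key 1 one_pos
    obtain ⟨μ₀, hμ₀, hpos₀, _⟩ := hSne
    refine le_antisymm (csSup_le ⟨_, μ₀, hμ₀, hpos₀, rfl⟩ hSbdd) ?_
    apply le_of_forall_pos_le_add
    intro ε hε
    obtain ⟨μ, hμ, hpos, hge⟩ := key ε hε
    have hmem : (∫ θ, (θ : Fin k → ℝ) i * L θ ∂μ) / (∫ θ, L θ ∂μ) ∈
        {r | ∃ μ ∈ M, 0 < ∫ θ, L θ ∂μ ∧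
          r = (∫ θ, (θ : Fin k → ℝ) i * L θ ∂μ) / (∫ θ, L θ ∂μ)} := ⟨μ, hμ, hpos, rfl⟩
    have := le_csSup ⟨1, fun r hr => hSbdd r hr⟩ hmem
    linarith
  · -- sInf part
    intro j hj
    have hT0 : ∀ r ∈ {r | ∃ μ ∈ M, 0 < ∫ θ, L θ ∂μ ∧
        r = (∫ θ, (θ : Fin k → ℝ) j * L θ ∂μ) / (∫ θ, L θ ∂μ)}, (0:ℝ) ≤ r := by
      rintro r ⟨μ, hμ, hpos, rfl⟩
      exact div_nonneg (integral_nonneg fun θ => mul_nonneg (hθ0 θ j) (hL_nonneg θ)) hpos.le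
    obtain ⟨μ₀, hμ₀, hpos₀, _⟩ := key 1 one_pos
    refine le_antisymm ?_ (le_csInf ⟨_, μ₀, hμ₀, hpos₀, rfl⟩ hT0)
    apply le_of_forall_pos_le_add
    intro ε hε
    obtain ⟨μ, hμ, hpos, hge⟩ := key ε hε
    haveI := hMprob μ hμ
    -- ratio for j is ≤ ε
    have hj1 : ∫ θ, (θ : Fin k → ℝ) j * L θ ∂μ ≤ (∫ θ, L θ ∂μ) - ∫ θ, (θ : Fin k → ℝ) i * L θ ∂μ := by
      have hi2 : Integrable (fun θ : stdSimplex ℝ (Fin k) => L θ - (θ : Fin k → ℝ) i * L θ) μ :=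
        (intL μ hμ).sub (intjL μ hμ i)
      have := integral_mono (intjL μ hμ j) hi2
        (fun θ => by nlinarith [hθpair θ j hj, hL_nonneg θ, hθ0 θ j])
      rwa [integral_sub (intL μ hμ) (intjL μ hμ i)] at this
    have h2 : (∫ θ, (θ : Fin k → ℝ) j * L θ ∂μ) / (∫ θ, L θ ∂μ) ≤
        1 - (∫ θ, (θ : Fin k → ℝ) i * L θ ∂μ) / (∫ θ, L θ ∂μ) := by
      rw [div_le_iff₀ hpos]
      have h3 : (∫ θ, (θ : Fin k → ℝ) i * L θ ∂μ) / (∫ θ, L θ ∂μ) * (∫ θ, L θ ∂μ)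
          = ∫ θ, (θ : Fin k → ℝ) i * L θ ∂μ := div_mul_cancel₀ _ hpos.ne'
      nlinarith [hj1]
    have hle : (∫ θ, (θ : Fin k → ℝ) j * L θ ∂μ) / (∫ θ, L θ ∂μ) ≤ ε := by linarith
    have hmem : (∫ θ, (θ : Fin k → ℝ) j * L θ ∂μ) / (∫ θ, L θ ∂μ) ∈
        {r | ∃ μ ∈ M, 0 < ∫ θ, L θ ∂μ ∧
          r = (∫ θ, (θ : Fin k → ℝ) j * L θ ∂μ) / (∫ θ, L θ ∂μ)} := ⟨μ, hμ, hpos, rfl⟩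
    have := csInf_le ⟨0, fun r hr => hT0 r hr⟩ hmem
    linarith
end

section
/- Let Θ be the standard simplex in ℝ^k, fix an index i and an integer N' ≥ 1, and let e^i ∈ Θ be the vertex with i-th coordinate 1. Let M be a nonempty set of Borel probability measures on Θ with sup_{μ∈M} ∫_Θ θ_i dμ = 1, and let L : Θ → ℝ be a nonnegative bounded measurable likelihood with L(e^i) > 0 that is continuous on some neighborhood of e^i (relative to Θ). Then the posterior upper probability of the length-N' dataset d^i consisting of N' copies of outcome x_i is vacuous: sup{ (∫_Θ θ_i^{N'}·L dμ)/(∫_Θ L dμ) : μ ∈ M, ∫_Θ L dμ > 0 } = 1; and consequently, for every frequency vector (n'₁,…,n'_k) of nonnegative integers with Σ_j n'_j = N' and n'_i < N', the posterior lower probability is vacuous: inf{ (∫_Θ ∏_j θ_j^{n'_j}·L dμ)/(∫_Θ L dμ) : μ ∈ M, ∫_Θ L dμ > 0 } = 0. -/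
open MeasureTheory Filter Topology

set_option maxHeartbeats 1000000 in
/-- **Corollary 4.**
Let `Θ` be the standard simplex in `ℝ^k`, `i` a fixed index, `N' ≥ 1` an integer,
and `e^i ∈ Θ` the vertex with `i`-th coordinate `1`.  Let `M` be a nonempty set of
Borel probability measures on `Θ` with `sup_{μ∈M} ∫ θᵢ dμ = 1`, and let `L : Θ → ℝ`
be a nonnegative bounded measurable likelihood with `L e^i > 0`, continuous on some
neighborhood of `e^i` (relative to `Θ`).  Then the posterior upper probability of
the dataset `d^i` of `N'` copies of outcome `i` is vacuous,
`sup { (∫ θᵢ^{N'}·L dμ)/(∫ L dμ) | μ ∈ M, ∫ L dμ > 0 } = 1`, and consequently, for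
every frequency vector `(n'₁,…,n'_k)` with `Σⱼ n'ⱼ = N'` and `n'ᵢ < N'`, the
posterior lower probability is vacuous:
`inf { (∫ ∏ⱼ θⱼ^{n'ⱼ}·L dμ)/(∫ L dμ) | μ ∈ M, ∫ L dμ > 0 } = 0`. -/
theorem vacuous_posterior_dataset_probability
    (k : ℕ) (i : Fin k) (N' : ℕ) (hN' : 1 ≤ N')
    (hei : (fun j => if j = i then (1 : ℝ) else 0) ∈ stdSimplex ℝ (Fin k))
    (M : Set (Measure (stdSimplex ℝ (Fin k))))
    (hM : M.Nonempty)
    (hMprob : ∀ μ ∈ M, IsProbabilityMeasure μ)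
    (L : stdSimplex ℝ (Fin k) → ℝ)
    (hL_nonneg : ∀ θ, 0 ≤ L θ)
    (hL_bdd : ∃ C, ∀ θ, L θ ≤ C)
    (hL_meas : Measurable L)
    (hL_cont : ∃ U ∈ 𝓝 (⟨_, hei⟩ : stdSimplex ℝ (Fin k)), ContinuousOn L U)
    (hL_pos : 0 < L ⟨_, hei⟩)
    (hprior : sSup {r | ∃ μ ∈ M, r = ∫ θ, (θ : Fin k → ℝ) i ∂μ} = 1) :
    sSup {r | ∃ μ ∈ M, 0 < ∫ θ, L θ ∂μ ∧
        r = (∫ θ, (θ : Fin k → ℝ) i ^ N' * L θ ∂μ) / (∫ θ, L θ ∂μ)} = 1 ∧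
    ∀ n' : Fin k → ℕ, (∑ j, n' j) = N' → n' i < N' →
      sInf {r | ∃ μ ∈ M, 0 < ∫ θ, L θ ∂μ ∧
          r = (∫ θ, (∏ j, (θ : Fin k → ℝ) j ^ n' j) * L θ ∂μ) / (∫ θ, L θ ∂μ)} = 0 := by
  classical
  set ei : stdSimplex ℝ (Fin k) := ⟨_, hei⟩ with hei_def
  obtain ⟨C, hC⟩ := hL_bdd
  have hC0 : 0 < C := lt_of_lt_of_le hL_pos (hC ei)
  set c : ℝ := L ei / 2 with hc_def
  have hc : 0 < c := by
    have : 0 < L ei := hL_pos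
    positivity
  have h2c : 2 * c = L ei := by rw [hc_def]; ring
  -- continuity near ei
  obtain ⟨U, hU, hUcont⟩ := hL_cont
  have hcontAt : ContinuousAt L ei := hUcont.continuousAt hU
  have hmem : L ⁻¹' Set.Ioi c ∈ 𝓝 ei :=
    hcontAt (Ioi_mem_nhds (by linarith [hL_pos]))
  obtain ⟨δ, hδ0, hball⟩ := Metric.mem_nhds_iff.mp hmem
  have hLball : ∀ θ : stdSimplex ℝ (Fin k), dist θ ei < δ → c < L θ := by
    intro θ h
    exact hball (Metric.mem_ball.mpr h)
  -- simplex pointwise facts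
  have hθ0 : ∀ (θ : stdSimplex ℝ (Fin k)) (j : Fin k), 0 ≤ (θ : Fin k → ℝ) j :=
    fun θ j => θ.2.1 j
  have hθsum : ∀ θ : stdSimplex ℝ (Fin k), ∑ j, (θ : Fin k → ℝ) j = 1 := fun θ => θ.2.2
  have hθ1 : ∀ (θ : stdSimplex ℝ (Fin k)) (j : Fin k), (θ : Fin k → ℝ) j ≤ 1 := by
    intro θ j
    rw [← hθsum θ]
    exact Finset.single_le_sum (fun l _ => hθ0 θ l) (Finset.mem_univ j)
  have hθle : ∀ (θ : stdSimplex ℝ (Fin k)) (j : Fin k), j ≠ i →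
      (θ : Fin k → ℝ) j ≤ 1 - (θ : Fin k → ℝ) i := by
    intro θ j hj
    have hsub : ({j, i} : Finset (Fin k)) ⊆ Finset.univ := Finset.subset_univ _
    have := Finset.sum_le_sum_of_subset_of_nonneg hsub
      (fun l _ _ => hθ0 θ l)
    rw [Finset.sum_pair hj, hθsum θ] at this
    linarith
  have hdist : ∀ θ : stdSimplex ℝ (Fin k), dist θ ei ≤ 1 - (θ : Fin k → ℝ) i := by
    intro θ
    have h01 : 0 ≤ 1 - (θ : Fin k → ℝ) i := by linarith [hθ1 θ i]
    rw [Subtype.dist_eq, dist_pi_le_iff h01]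
    intro j
    change dist (θ j) (ei.val j) ≤ _
    rcases eq_or_ne j i with rfl | hj
    · have : ei.val j = 1 := by simp [hei_def]
      rw [this, Real.dist_eq]
      rw [abs_le]
      constructor <;> [linarith [hθ1 θ j]; linarith [hθ0 θ j]]
    · have : ei.val j = 0 := by simp [hei_def, hj]
      rw [this, Real.dist_eq, sub_zero, abs_le]
      constructor
      · linarith [hθ0 θ j, hθ1 θ i]
      · exact hθle θ j hj
  set K : ℝ := C / δ with hK_def
  have hK0 : 0 < K := div_pos hC0 hδ0
  have hLlow : ∀ θ : stdSimplex ℝ (Fin k),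
      c - K * (1 - (θ : Fin k → ℝ) i) ≤ L θ := by
    intro θ
    by_cases h : dist θ ei < δ
    · have h1 := hLball θ h
      have h2 : 0 ≤ K * (1 - (θ : Fin k → ℝ) i) :=
        mul_nonneg hK0.le (by linarith [hθ1 θ i])
      linarith
    · push_neg at h
      have h1 : δ ≤ 1 - (θ : Fin k → ℝ) i := le_trans h (hdist θ)
      have h2 : K * δ ≤ K * (1 - (θ : Fin k → ℝ) i) :=
        mul_le_mul_of_nonneg_left h1 hK0.le
      have h3 : K * δ = C := by
        rw [hK_def]; field_simp
      have h4 : 2 * c ≤ C := by rw [h2c]; exact hC ei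
      linarith [hL_nonneg θ]
  have hpow : ∀ θ : stdSimplex ℝ (Fin k),
      1 - (θ : Fin k → ℝ) i ^ N' ≤ (N' : ℝ) * (1 - (θ : Fin k → ℝ) i) := by
    intro θ
    have hb := one_add_mul_le_pow (show (-2 : ℝ) ≤ (θ : Fin k → ℝ) i - 1 by
      linarith [hθ0 θ i]) N'
    have he : (1 : ℝ) + ((θ : Fin k → ℝ) i - 1) = (θ : Fin k → ℝ) i := by ring
    rw [he] at hb
    linarith
  -- measurability
  have mθ : Measurable (fun θ : stdSimplex ℝ (Fin k) => (θ : Fin k → ℝ) i) :=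
    (measurable_pi_apply i).comp measurable_subtype_coe
  -- integrability from bounds
  have intBound : ∀ (μ : Measure (stdSimplex ℝ (Fin k))), IsProbabilityMeasure μ →
      ∀ (f : stdSimplex ℝ (Fin k) → ℝ) (B : ℝ), Measurable f → (∀ θ, |f θ| ≤ B) →
      Integrable f μ := by
    intro μ hμ f B hf hB
    haveI := hμ
    exact (integrable_const B).mono' hf.aestronglyMeasurable
      (ae_of_all _ fun θ => by simpa [Real.norm_eq_abs] using hB θ)
  -- key extraction: measures with ∫ θ_i close to 1, hence ∫ L bounded below
  have key : ∀ α : ℝ, 0 < α → ∃ μ ∈ M, IsProbabilityMeasure μ ∧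
      Integrable L μ ∧ Integrable (fun θ : stdSimplex ℝ (Fin k) => (θ : Fin k → ℝ) i) μ ∧
      c / 2 ≤ ∫ θ, L θ ∂μ ∧ 1 - ∫ θ, (θ : Fin k → ℝ) i ∂μ ≤ α := by
    intro α hα
    set β : ℝ := min α (c * δ / (2 * C)) with hβ_def
    have hβ0 : 0 < β := lt_min hα (by positivity)
    have hβα : β ≤ α := min_le_left _ _
    have hβ2 : β ≤ c * δ / (2 * C) := min_le_right _ _
    have hKβ : K * β ≤ c / 2 := by
      have : K * β ≤ K * (c * δ / (2 * C)) := mul_le_mul_of_nonneg_left hβ2 hK0.le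
      have heq : K * (c * δ / (2 * C)) = c / 2 := by
        rw [hK_def]; field_simp
      linarith
    have hset_ne : {r | ∃ μ ∈ M, r = ∫ θ, (θ : Fin k → ℝ) i ∂μ}.Nonempty := by
      obtain ⟨μ, hμ⟩ := hM
      exact ⟨_, μ, hμ, rfl⟩
    have hlt : 1 - β < sSup {r | ∃ μ ∈ M, r = ∫ θ, (θ : Fin k → ℝ) i ∂μ} := by
      rw [hprior]; linarith
    obtain ⟨r, ⟨μ, hμM, rfl⟩, hr⟩ := exists_lt_of_lt_csSup hset_ne hlt
    haveI hPμ := hMprob μ hμM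
    have intL : Integrable L μ := intBound μ hPμ L C hL_meas
      (fun θ => by rw [abs_of_nonneg (hL_nonneg θ)]; exact hC θ)
    have intθ : Integrable (fun θ : stdSimplex ℝ (Fin k) => (θ : Fin k → ℝ) i) μ :=
      intBound μ hPμ _ 1 mθ
        (fun θ => by rw [abs_of_nonneg (hθ0 θ i)]; exact hθ1 θ i)
    refine ⟨μ, hμM, hPμ, intL, intθ, ?_, by linarith⟩
    have haff : Integrable (fun θ : stdSimplex ℝ (Fin k) =>
        (c - K) + K * (θ : Fin k → ℝ) i) μ :=
      (integrable_const _).add (intθ.const_mul K)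
    have h1 : ∫ θ, ((c - K) + K * (θ : Fin k → ℝ) i) ∂μ ≤ ∫ θ, L θ ∂μ := by
      refine integral_mono haff intL (fun θ => ?_)
      have := hLlow θ
      simp only
      linarith [this]
    have h2 : ∫ θ, ((c - K) + K * (θ : Fin k → ℝ) i) ∂μ
        = (c - K) + K * ∫ θ, (θ : Fin k → ℝ) i ∂μ := by
      rw [integral_add (integrable_const _) (intθ.const_mul K), integral_const,
        integral_const_mul]
      simp
    have hI : 1 - β ≤ ∫ θ, (θ : Fin k → ℝ) i ∂μ := hr.le
    have h3 : K * (1 - β) ≤ K * ∫ θ, (θ : Fin k → ℝ) i ∂μ :=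
      mul_le_mul_of_nonneg_left hI hK0.le
    nlinarith [h1, h2, h3, hKβ]
  -- Part 1
  have part1 : sSup {r | ∃ μ ∈ M, 0 < ∫ θ, L θ ∂μ ∧
      r = (∫ θ, (θ : Fin k → ℝ) i ^ N' * L θ ∂μ) / (∫ θ, L θ ∂μ)} = 1 := by
    set S := {r | ∃ μ ∈ M, 0 < ∫ θ, L θ ∂μ ∧
      r = (∫ θ, (θ : Fin k → ℝ) i ^ N' * L θ ∂μ) / (∫ θ, L θ ∂μ)} with hS_def
    have hub : ∀ r ∈ S, r ≤ 1 := by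
      rintro r ⟨μ, hμM, hpos, rfl⟩
      haveI hPμ := hMprob μ hμM
      have intL : Integrable L μ := intBound μ hPμ L C hL_meas
        (fun θ => by rw [abs_of_nonneg (hL_nonneg θ)]; exact hC θ)
      have intnum : Integrable (fun θ : stdSimplex ℝ (Fin k) =>
          (θ : Fin k → ℝ) i ^ N' * L θ) μ := by
        refine intBound μ hPμ _ C ((mθ.pow_const N').mul hL_meas) (fun θ => ?_)
        have h1 : 0 ≤ (θ : Fin k → ℝ) i ^ N' * L θ :=
          mul_nonneg (pow_nonneg (hθ0 θ i) _) (hL_nonneg θ)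
        rw [abs_of_nonneg h1]
        calc (θ : Fin k → ℝ) i ^ N' * L θ ≤ 1 * L θ := by
              refine mul_le_mul_of_nonneg_right ?_ (hL_nonneg θ)
              exact pow_le_one₀ (hθ0 θ i) (hθ1 θ i)
          _ = L θ := one_mul _
          _ ≤ C := hC θ
      have hmono : ∫ θ, (θ : Fin k → ℝ) i ^ N' * L θ ∂μ ≤ ∫ θ, L θ ∂μ := by
        refine integral_mono intnum intL (fun θ => ?_)
        simp only
        calc (θ : Fin k → ℝ) i ^ N' * L θ ≤ 1 * L θ :=
              mul_le_mul_of_nonneg_right (pow_le_one₀ (hθ0 θ i) (hθ1 θ i)) (hL_nonneg θ)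
          _ = L θ := one_mul _
      exact div_le_one_of_le₀ hmono hpos.le
    have hgood : ∀ w : ℝ, w < 1 → ∃ r ∈ S, w < r := by
      intro w hw
      set α : ℝ := (1 - w) * c / (4 * C * N') with hα_def
      have hN'0 : (0 : ℝ) < (N' : ℝ) := by exact_mod_cast hN'
      have hα0 : 0 < α := by
        rw [hα_def]
        have : 0 < 1 - w := by linarith
        positivity
      obtain ⟨μ, hμM, hPμ, intL, intθ, hden, hclose⟩ := key α hα0
      haveI := hPμ
      have intnum : Integrable (fun θ : stdSimplex ℝ (Fin k) =>
          (θ : Fin k → ℝ) i ^ N' * L θ) μ := by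
        refine intBound μ hPμ _ C ((mθ.pow_const N').mul hL_meas) (fun θ => ?_)
        have h1 : 0 ≤ (θ : Fin k → ℝ) i ^ N' * L θ :=
          mul_nonneg (pow_nonneg (hθ0 θ i) _) (hL_nonneg θ)
        rw [abs_of_nonneg h1]
        calc (θ : Fin k → ℝ) i ^ N' * L θ ≤ 1 * L θ :=
              mul_le_mul_of_nonneg_right (pow_le_one₀ (hθ0 θ i) (hθ1 θ i)) (hL_nonneg θ)
          _ = L θ := one_mul _
          _ ≤ C := hC θ
      have hpos : 0 < ∫ θ, L θ ∂μ := lt_of_lt_of_le (by linarith) hden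
      -- difference bound
      have hdiff : ∫ θ, L θ ∂μ - ∫ θ, (θ : Fin k → ℝ) i ^ N' * L θ ∂μ
          ≤ C * N' * α := by
        have hsub : ∫ θ, L θ ∂μ - ∫ θ, (θ : Fin k → ℝ) i ^ N' * L θ ∂μ
            = ∫ θ, (L θ - (θ : Fin k → ℝ) i ^ N' * L θ) ∂μ :=
          (integral_sub intL intnum).symm
        have hmono : ∫ θ, (L θ - (θ : Fin k → ℝ) i ^ N' * L θ) ∂μ
            ≤ ∫ θ, (C * N' - C * N' * (θ : Fin k → ℝ) i) ∂μ := by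
          refine integral_mono (intL.sub intnum)
            ((integrable_const _).sub (intθ.const_mul _)) (fun θ => ?_)
          simp only
          have hp : (1 - (θ : Fin k → ℝ) i ^ N') * L θ
              ≤ ((N' : ℝ) * (1 - (θ : Fin k → ℝ) i)) * C := by
            refine mul_le_mul (hpow θ) (hC θ) (hL_nonneg θ) ?_
            exact mul_nonneg hN'0.le (by linarith [hθ1 θ i])
          nlinarith [hp]
        have heq : ∫ θ, (C * N' - C * N' * (θ : Fin k → ℝ) i) ∂μ
            = C * N' - C * N' * ∫ θ, (θ : Fin k → ℝ) i ∂μ := by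
          rw [integral_sub (integrable_const _) (intθ.const_mul _), integral_const,
            integral_const_mul]
          simp
        have hI : C * N' * (1 - ∫ θ, (θ : Fin k → ℝ) i ∂μ) ≤ C * N' * α :=
          mul_le_mul_of_nonneg_left hclose (by positivity)
        nlinarith [hsub, hmono, heq, hI]
      refine ⟨_, ⟨μ, hμM, hpos, rfl⟩, ?_⟩
      rw [lt_div_iff₀ hpos]
      have hCNα : C * N' * α = (1 - w) * c / 4 := by
        rw [hα_def]; field_simp
      nlinarith [hdiff, hden, hc, mul_le_mul_of_nonneg_left hden
        (show (0:ℝ) ≤ 1 - w by linarith)]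
    have hne : S.Nonempty := by
      obtain ⟨r, hr, _⟩ := hgood 0 (by norm_num)
      exact ⟨r, hr⟩
    refine le_antisymm (csSup_le hne hub) ?_
    refine le_of_forall_lt fun w hw => ?_
    obtain ⟨r, hr, hwr⟩ := hgood w hw
    exact lt_of_lt_of_le hwr (le_csSup ⟨1, hub⟩ hr)
  refine ⟨part1, ?_⟩
  -- Part 2
  intro n' hsum hni
  set S := {r | ∃ μ ∈ M, 0 < ∫ θ, L θ ∂μ ∧
      r = (∫ θ, (∏ j, (θ : Fin k → ℝ) j ^ n' j) * L θ ∂μ) / (∫ θ, L θ ∂μ)} with hS_def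
  have hprod : ∀ θ : stdSimplex ℝ (Fin k),
      (∏ j, (θ : Fin k → ℝ) j ^ n' j) ≤ 1 - (θ : Fin k → ℝ) i := by
    intro θ
    have hex : ∃ j, j ≠ i ∧ 1 ≤ n' j := by
      by_contra h
      push_neg at h
      have : ∑ j, n' j = n' i := by
        refine Finset.sum_eq_single_of_mem i (Finset.mem_univ i) (fun j _ hj => ?_)
        have := h j hj
        omega
      omega
    obtain ⟨j₀, hj₀i, hj₀n⟩ := hex
    have hsplit : (θ : Fin k → ℝ) j₀ ^ n' j₀ *
        ∏ j ∈ Finset.univ.erase j₀, (θ : Fin k → ℝ) j ^ n' j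
        = ∏ j, (θ : Fin k → ℝ) j ^ n' j :=
      Finset.mul_prod_erase Finset.univ
        (fun j => (θ : Fin k → ℝ) j ^ n' j) (Finset.mem_univ j₀)
    have hrest : ∏ j ∈ Finset.univ.erase j₀, (θ : Fin k → ℝ) j ^ n' j ≤ 1 := by
      refine Finset.prod_le_one (fun j _ => pow_nonneg (hθ0 θ j) _)
        (fun j _ => pow_le_one₀ (hθ0 θ j) (hθ1 θ j))
    have hrest0 : 0 ≤ ∏ j ∈ Finset.univ.erase j₀, (θ : Fin k → ℝ) j ^ n' j :=
      Finset.prod_nonneg (fun j _ => pow_nonneg (hθ0 θ j) _)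
    have hpownn : 0 ≤ (θ : Fin k → ℝ) j₀ ^ n' j₀ := pow_nonneg (hθ0 θ j₀) _
    have h1 : ∏ j, (θ : Fin k → ℝ) j ^ n' j ≤ (θ : Fin k → ℝ) j₀ ^ n' j₀ := by
      rw [← hsplit]
      nlinarith [hpownn, hrest, hrest0]
    have h2 : (θ : Fin k → ℝ) j₀ ^ n' j₀ ≤ (θ : Fin k → ℝ) j₀ :=
      pow_le_of_le_one (hθ0 θ j₀) (hθ1 θ j₀) (by omega)
    exact le_trans h1 (le_trans h2 (hθle θ j₀ hj₀i))
  have hlb : ∀ r ∈ S, 0 ≤ r := by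
    rintro r ⟨μ, hμM, hpos, rfl⟩
    refine div_nonneg (integral_nonneg fun θ => ?_) hpos.le
    exact mul_nonneg (Finset.prod_nonneg fun j _ => pow_nonneg (hθ0 θ j) _) (hL_nonneg θ)
  have hsmall : ∀ ε : ℝ, 0 < ε → ∃ r ∈ S, r < ε := by
    intro ε hε
    set α : ℝ := ε * c / (4 * C) with hα_def
    have hα0 : 0 < α := by rw [hα_def]; positivity
    obtain ⟨μ, hμM, hPμ, intL, intθ, hden, hclose⟩ := key α hα0
    haveI := hPμ
    have hpos : 0 < ∫ θ, L θ ∂μ := lt_of_lt_of_le (by linarith) hden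
    have mprod : Measurable (fun θ : stdSimplex ℝ (Fin k) =>
        (∏ j, (θ : Fin k → ℝ) j ^ n' j) * L θ) := by
      refine Measurable.mul ?_ hL_meas
      exact Finset.measurable_prod _ (fun j _ =>
        ((measurable_pi_apply j).comp measurable_subtype_coe).pow_const _)
    have intnum : Integrable (fun θ : stdSimplex ℝ (Fin k) =>
        (∏ j, (θ : Fin k → ℝ) j ^ n' j) * L θ) μ := by
      refine intBound μ hPμ _ C mprod (fun θ => ?_)
      have h0 : 0 ≤ (∏ j, (θ : Fin k → ℝ) j ^ n' j) * L θ :=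
        mul_nonneg (Finset.prod_nonneg fun j _ => pow_nonneg (hθ0 θ j) _) (hL_nonneg θ)
      rw [abs_of_nonneg h0]
      have hp1 : (∏ j, (θ : Fin k → ℝ) j ^ n' j) ≤ 1 :=
        Finset.prod_le_one (fun j _ => pow_nonneg (hθ0 θ j) _)
          (fun j _ => pow_le_one₀ (hθ0 θ j) (hθ1 θ j))
      calc (∏ j, (θ : Fin k → ℝ) j ^ n' j) * L θ ≤ 1 * L θ :=
            mul_le_mul_of_nonneg_right hp1 (hL_nonneg θ)
        _ = L θ := one_mul _
        _ ≤ C := hC θ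
    have hnum : ∫ θ, (∏ j, (θ : Fin k → ℝ) j ^ n' j) * L θ ∂μ
        ≤ C * (1 - ∫ θ, (θ : Fin k → ℝ) i ∂μ) := by
      have hmono : ∫ θ, (∏ j, (θ : Fin k → ℝ) j ^ n' j) * L θ ∂μ
          ≤ ∫ θ, (C - C * (θ : Fin k → ℝ) i) ∂μ := by
        refine integral_mono intnum
          ((integrable_const _).sub (intθ.const_mul _)) (fun θ => ?_)
        simp only
        have hp : (∏ j, (θ : Fin k → ℝ) j ^ n' j) * L θ
            ≤ (1 - (θ : Fin k → ℝ) i) * C := by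
          refine mul_le_mul (hprod θ) (hC θ) (hL_nonneg θ) ?_
          linarith [hθ1 θ i]
        nlinarith [hp]
      have heq : ∫ θ, (C - C * (θ : Fin k → ℝ) i) ∂μ
          = C - C * ∫ θ, (θ : Fin k → ℝ) i ∂μ := by
        rw [integral_sub (integrable_const _) (intθ.const_mul _), integral_const,
          integral_const_mul]
        simp
      nlinarith [hmono, heq]
    have hCα : C * α = ε * c / 4 := by
      rw [hα_def]; field_simp
    refine ⟨_, ⟨μ, hμM, hpos, rfl⟩, ?_⟩
    rw [div_lt_iff₀ hpos]
    have h1 : C * (1 - ∫ θ, (θ : Fin k → ℝ) i ∂μ) ≤ C * α :=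
      mul_le_mul_of_nonneg_left hclose hC0.le
    nlinarith [hnum, h1, hden, mul_le_mul_of_nonneg_left hden hε.le]
  have hne : S.Nonempty := by
    obtain ⟨r, hr, _⟩ := hsmall 1 (by norm_num)
    exact ⟨r, hr⟩
  refine le_antisymm ?_ (le_csInf hne hlb)
  by_contra h
  push_neg at h
  obtain ⟨r, hr, hrlt⟩ := hsmall _ h
  exact absurd (csInf_le ⟨0, hlb⟩ hr) (not_le.mpr hrlt)
end

section
/- Let Θ be the standard simplex in ℝ^k, let n'₁,…,n'_k be nonnegative integers with N' = Σ_i n'_i > 0, and let g(θ) = ∏_{i=1}^k θ_i^{n'_i}. Let M be a nonempty set of Borel probability measures on Θ and let L : Θ → ℝ be a likelihood that is continuous and strictly positive on all of Θ. If the prior predictive probabilities of the dataset with frequencies (n'₁,…,n'_k) are vacuous, i.e. inf_{μ∈M} ∫_Θ g dμ = 0 and sup_{μ∈M} ∫_Θ g dμ = ∏_{i=1}^k (n'_i/N')^{n'_i}, then the posterior predictive probabilities are vacuous as well: inf_{μ∈M} (∫_Θ g·L dμ)/(∫_Θ L dμ) = 0 and sup_{μ∈M} (∫_Θ g·L dμ)/(∫_Θ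 L dμ) = ∏_{i=1}^k (n'_i/N')^{n'_i} (note ∫_Θ L dμ > 0 automatically for every μ since L is continuous and strictly positive on the compact set Θ). -/
open MeasureTheory Filter Topology

-- pointwise AM-GM bound
lemma g_le_G (k : ℕ) (n' : Fin k → ℕ) (hN' : 0 < ∑ i, n' i)
    (θ : stdSimplex ℝ (Fin k)) :
    ∏ i, (θ : Fin k → ℝ) i ^ n' i ≤ ∏ i, ((n' i : ℝ) / ((∑ j, n' j : ℕ) : ℝ)) ^ n' i := by
  set N : ℝ := ((∑ j, n' j : ℕ) : ℝ) with hN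
  have hNpos : 0 < N := by rw [hN]; exact_mod_cast hN'
  obtain ⟨hθ0, hθ1⟩ := θ.2
  set w : Fin k → ℝ := fun i => (n' i : ℝ) / N with hw
  set z : Fin k → ℝ := fun i => if n' i = 0 then 1 else (θ : Fin k → ℝ) i * N / (n' i : ℝ) with hz
  have hwnn : ∀ i ∈ Finset.univ, (0:ℝ) ≤ w i := fun i _ =>
    div_nonneg (Nat.cast_nonneg _) hNpos.le
  have hwsum : ∑ i, w i = 1 := by
    rw [hw, ← Finset.sum_div]
    rw [div_eq_one_iff_eq hNpos.ne']
    push_cast [hN]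
    rfl
  have hznn : ∀ i ∈ Finset.univ, (0:ℝ) ≤ z i := by
    intro i _
    by_cases h : n' i = 0 <;> simp only [hz, h, if_pos, if_neg, ite_true, ite_false]
    · norm_num
    · exact div_nonneg (mul_nonneg (hθ0 i) hNpos.le) (Nat.cast_nonneg _)
  have amgm := Real.geom_mean_le_arith_mean_weighted Finset.univ w z hwnn hwsum hznn
  have hsum1 : ∑ i, w i * z i ≤ 1 := by
    rw [← hθ1]
    apply Finset.sum_le_sum
    intro i _
    by_cases h : n' i = 0
    · simp [hw, hz, h]
      exact hθ0 i
    · have hni : (n' i : ℝ) ≠ 0 := Nat.cast_ne_zero.mpr h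
      have : w i * z i = (θ : Fin k → ℝ) i := by
        simp only [hw, hz, if_neg h]
        field_simp
      rw [this]
      exact le_rfl
  have hP1 : ∏ i, z i ^ w i ≤ 1 := amgm.trans hsum1
  have hP0 : 0 ≤ ∏ i, z i ^ w i :=
    Finset.prod_nonneg fun i _ => Real.rpow_nonneg (hznn i (Finset.mem_univ i)) _
  -- raise to the N-th (natural) power
  have hQ : ∏ i, z i ^ n' i ≤ 1 := by
    have := pow_le_one₀ hP0 hP1 (n := ∑ j, n' j)
    calc ∏ i, z i ^ n' i = (∏ i, z i ^ w i) ^ (∑ j, n' j) := by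
          rw [← Finset.prod_pow]
          refine Finset.prod_congr rfl ?_
          intro i _
          rw [← Real.rpow_natCast (z i ^ w i) (∑ j, n' j),
            ← Real.rpow_mul (hznn i (Finset.mem_univ i))]
          have : w i * ((∑ j, n' j : ℕ) : ℝ) = (n' i : ℝ) := by
            show (n' i : ℝ) / N * N = _
            rw [div_mul_cancel₀ _ hNpos.ne']
          rw [this, Real.rpow_natCast]
      _ ≤ 1 := this
  have hfac : ∀ i, (θ : Fin k → ℝ) i ^ n' i = z i ^ n' i * w i ^ n' i := by
    intro i
    by_cases h : n' i = 0
    · simp [h]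
    · have hni : (n' i : ℝ) ≠ 0 := Nat.cast_ne_zero.mpr h
      rw [← mul_pow]
      congr 1
      simp only [hz, hw, if_neg h]
      field_simp
  calc ∏ i, (θ : Fin k → ℝ) i ^ n' i = (∏ i, z i ^ n' i) * ∏ i, w i ^ n' i := by
        rw [← Finset.prod_mul_distrib]; exact Finset.prod_congr rfl fun i _ => hfac i
    _ ≤ 1 * ∏ i, w i ^ n' i := by
        apply mul_le_mul_of_nonneg_right hQ
        exact Finset.prod_nonneg fun i _ => pow_nonneg (hwnn i (Finset.mem_univ i)) _
    _ = ∏ i, ((n' i : ℝ) / N) ^ n' i := by rw [one_mul]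



/-- **Corollary 5 (main corollary).**
Let `Θ` be the standard simplex in `ℝ^k`, `n'₁, …, n'_k` nonnegative integers with
`N' = Σᵢ n'ᵢ > 0`, and `g θ = ∏ᵢ θᵢ ^ n'ᵢ`.  Let `M` be a nonempty set of Borel
probability measures on `Θ` and let the likelihood `L : Θ → ℝ` be continuous and
strictly positive on all of `Θ`.  If the prior predictive probabilities of the
dataset with frequencies `(n'₁,…,n'_k)` are vacuous, i.e.
`inf_{μ∈M} ∫ g dμ = 0` and `sup_{μ∈M} ∫ g dμ = ∏ᵢ (n'ᵢ/N')^{n'ᵢ}`, then the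
posterior predictive probabilities are vacuous as well:
`inf_{μ∈M} (∫ g·L dμ)/(∫ L dμ) = 0` and
`sup_{μ∈M} (∫ g·L dμ)/(∫ L dμ) = ∏ᵢ (n'ᵢ/N')^{n'ᵢ}`. -/
theorem no_learning_of_predictive_probabilities
    (k : ℕ) (n' : Fin k → ℕ) (hN' : 0 < ∑ i, n' i)
    (M : Set (Measure (stdSimplex ℝ (Fin k))))
    (hM : M.Nonempty)
    (hMprob : ∀ μ ∈ M, IsProbabilityMeasure μ)
    (L : stdSimplex ℝ (Fin k) → ℝ)
    (hL_cont : Continuous L)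
    (hL_pos : ∀ θ, 0 < L θ)
    (hprior_inf : sInf {r | ∃ μ ∈ M, r = ∫ θ, ∏ i, (θ : Fin k → ℝ) i ^ n' i ∂μ} = 0)
    (hprior_sup : sSup {r | ∃ μ ∈ M, r = ∫ θ, ∏ i, (θ : Fin k → ℝ) i ^ n' i ∂μ}
        = ∏ i, ((n' i : ℝ) / ((∑ j, n' j : ℕ) : ℝ)) ^ n' i) :
    sInf {r | ∃ μ ∈ M,
        r = (∫ θ, (∏ i, (θ : Fin k → ℝ) i ^ n' i) * L θ ∂μ) / (∫ θ, L θ ∂μ)} = 0 ∧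
    sSup {r | ∃ μ ∈ M,
        r = (∫ θ, (∏ i, (θ : Fin k → ℝ) i ^ n' i) * L θ ∂μ) / (∫ θ, L θ ∂μ)}
      = ∏ i, ((n' i : ℝ) / ((∑ j, n' j : ℕ) : ℝ)) ^ n' i := by
  classical
  haveI : CompactSpace (stdSimplex ℝ (Fin k)) :=
    isCompact_iff_compactSpace.mp (isCompact_stdSimplex _ _)
  have hk : 0 < k := by
    rcases Nat.eq_zero_or_pos k with h | h
    · subst h; simp at hN'
    · exact h
  haveI : Nonempty (stdSimplex ℝ (Fin k)) :=
    ⟨⟨_, ite_eq_mem_stdSimplex ℝ (⟨0, hk⟩ : Fin k)⟩⟩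
  set g : stdSimplex ℝ (Fin k) → ℝ := fun θ => ∏ i, (θ : Fin k → ℝ) i ^ n' i with hgdef
  set G : ℝ := ∏ i, ((n' i : ℝ) / ((∑ j, n' j : ℕ) : ℝ)) ^ n' i with hGdef
  have hgc : Continuous g :=
    continuous_finset_prod _ fun i _ => ((continuous_apply i).comp continuous_subtype_val).pow _
  have hg0 : ∀ θ, 0 ≤ g θ := fun θ =>
    Finset.prod_nonneg fun i _ => pow_nonneg (θ.2.1 i) _
  have hgG : ∀ θ, g θ ≤ G := fun θ => g_le_G k n' hN' θ
  -- min and max of L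
  obtain ⟨θm, -, hθm⟩ :=
    isCompact_univ.exists_isMinOn Set.univ_nonempty hL_cont.continuousOn
  obtain ⟨θM, -, hθM⟩ :=
    isCompact_univ.exists_isMaxOn Set.univ_nonempty hL_cont.continuousOn
  set m : ℝ := L θm with hmdef
  set Mx : ℝ := L θM with hMxdef
  have hm : 0 < m := hL_pos θm
  have hmle : ∀ θ, m ≤ L θ := fun θ => hθm (Set.mem_univ θ)
  have hMxle : ∀ θ, L θ ≤ Mx := fun θ => hθM (Set.mem_univ θ)
  have hMx : 0 < Mx := lt_of_lt_of_le hm (hmle θM |>.trans (le_refl _))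
  -- basic facts for every μ ∈ M
  have integrable_of_cont : ∀ (μ : Measure (stdSimplex ℝ (Fin k))), IsProbabilityMeasure μ →
      ∀ (f : stdSimplex ℝ (Fin k) → ℝ), Continuous f → Integrable f μ := by
    intro μ hμ f hf
    exact hf.integrable_of_hasCompactSupport
      (IsCompact.of_isClosed_subset isCompact_univ (isClosed_tsupport f) (Set.subset_univ _))
  have key : ∀ μ ∈ M,
      0 ≤ (∫ θ, g θ ∂μ) ∧ (∫ θ, g θ ∂μ) ≤ G ∧
      0 ≤ (∫ θ, g θ * L θ ∂μ) / (∫ θ, L θ ∂μ) ∧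
      (∫ θ, g θ * L θ ∂μ) / (∫ θ, L θ ∂μ) ≤ G ∧
      (∫ θ, g θ * L θ ∂μ) / (∫ θ, L θ ∂μ) ≤ Mx * (∫ θ, g θ ∂μ) / m ∧
      G - Mx * (G - ∫ θ, g θ ∂μ) / m ≤ (∫ θ, g θ * L θ ∂μ) / (∫ θ, L θ ∂μ) := by
    intro μ hμ
    haveI hprob := hMprob μ hμ
    have hgint : Integrable g μ := integrable_of_cont μ hprob g hgc
    have hLint : Integrable L μ := integrable_of_cont μ hprob L hL_cont
    have hgLint : Integrable (fun θ => g θ * L θ) μ :=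
      integrable_of_cont μ hprob _ (hgc.mul hL_cont)
    have hIL : m ≤ ∫ θ, L θ ∂μ := by
      have := integral_mono (integrable_const m) hLint hmle
      simpa using this
    have hILpos : 0 < ∫ θ, L θ ∂μ := lt_of_lt_of_le hm hIL
    have hIg0 : 0 ≤ ∫ θ, g θ ∂μ := integral_nonneg hg0
    have hIgG : (∫ θ, g θ ∂μ) ≤ G := by
      have := integral_mono hgint (integrable_const G) hgG
      simpa using this
    have hIgL0 : 0 ≤ ∫ θ, g θ * L θ ∂μ :=
      integral_nonneg fun θ => mul_nonneg (hg0 θ) (hL_pos θ).le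
    have hIgL_le : (∫ θ, g θ * L θ ∂μ) ≤ Mx * ∫ θ, g θ ∂μ := by
      rw [← integral_const_mul]
      refine integral_mono hgLint (hgint.const_mul Mx) fun θ => ?_
      calc g θ * L θ ≤ g θ * Mx := mul_le_mul_of_nonneg_left (hMxle θ) (hg0 θ)
        _ = Mx * g θ := mul_comm _ _
    have hIgL_leG : (∫ θ, g θ * L θ ∂μ) ≤ G * ∫ θ, L θ ∂μ := by
      rw [← integral_const_mul]
      refine integral_mono hgLint (hLint.const_mul G) fun θ => ?_
      exact mul_le_mul_of_nonneg_right (hgG θ) (hL_pos θ).le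
    have hlow : G * (∫ θ, L θ ∂μ) - Mx * (G - ∫ θ, g θ ∂μ) ≤ ∫ θ, g θ * L θ ∂μ := by
      have h1 : (∫ θ, (G - g θ) * L θ ∂μ) ≤ Mx * (G - ∫ θ, g θ ∂μ) := by
        have h2 : (∫ θ, (G - g θ) * L θ ∂μ) ≤ ∫ θ, Mx * (G - g θ) ∂μ := by
          refine integral_mono
            (integrable_of_cont μ hprob _ ((continuous_const.sub hgc).mul hL_cont))
            (((integrable_const G).sub hgint).const_mul Mx) fun θ => ?_
          calc (G - g θ) * L θ ≤ (G - g θ) * Mx :=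
                mul_le_mul_of_nonneg_left (hMxle θ) (by linarith [hgG θ])
              _ = Mx * (G - g θ) := mul_comm _ _
        rw [integral_const_mul, integral_sub (integrable_const G) hgint] at h2
        simpa using h2
      have h3 : (∫ θ, (G - g θ) * L θ ∂μ)
          = G * (∫ θ, L θ ∂μ) - ∫ θ, g θ * L θ ∂μ := by
        have : (fun θ => (G - g θ) * L θ) = fun θ => G * L θ - g θ * L θ := by
          funext θ; ring
        rw [this, integral_sub (hLint.const_mul G) hgLint, integral_const_mul]
      linarith [h3 ▸ h1]
    refine ⟨hIg0, hIgG, div_nonneg hIgL0 hILpos.le, ?_, ?_, ?_⟩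
    · rw [div_le_iff₀ hILpos]; linarith
    · calc (∫ θ, g θ * L θ ∂μ) / (∫ θ, L θ ∂μ) ≤ (∫ θ, g θ * L θ ∂μ) / m :=
          div_le_div_of_nonneg_left hIgL0 hm hIL
        _ ≤ Mx * (∫ θ, g θ ∂μ) / m := by
          apply div_le_div_of_nonneg_right hIgL_le hm.le
    · have hnum : 0 ≤ Mx * (G - ∫ θ, g θ ∂μ) :=
        mul_nonneg hMx.le (by linarith)
      have step1 : Mx * (G - ∫ θ, g θ ∂μ) / (∫ θ, L θ ∂μ) ≤ Mx * (G - ∫ θ, g θ ∂μ) / m :=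
        div_le_div_of_nonneg_left hnum hm hIL
      have step2 : G - Mx * (G - ∫ θ, g θ ∂μ) / (∫ θ, L θ ∂μ)
          ≤ (∫ θ, g θ * L θ ∂μ) / (∫ θ, L θ ∂μ) := by
        have hrw : G - Mx * (G - ∫ θ, g θ ∂μ) / (∫ θ, L θ ∂μ)
            = (G * (∫ θ, L θ ∂μ) - Mx * (G - ∫ θ, g θ ∂μ)) / (∫ θ, L θ ∂μ) := by
          field_simp
        rw [hrw]
        exact div_le_div_of_nonneg_right hlow hILpos.le
      linarith
  obtain ⟨μ₀, hμ₀⟩ := hM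
  set S0 : Set ℝ := {r | ∃ μ ∈ M, r = ∫ θ, g θ ∂μ} with hS0def
  set S1 : Set ℝ := {r | ∃ μ ∈ M, r = (∫ θ, g θ * L θ ∂μ) / (∫ θ, L θ ∂μ)} with hS1def
  have hS0ne : S0.Nonempty := ⟨_, μ₀, hμ₀, rfl⟩
  have hS0bddb : BddBelow S0 := by
    refine ⟨0, ?_⟩; rintro r ⟨μ, hμ, rfl⟩; exact (key μ hμ).1
  have hS1ne : S1.Nonempty := ⟨_, μ₀, hμ₀, rfl⟩
  have hS1bddb : BddBelow S1 := by
    refine ⟨0, ?_⟩; rintro r ⟨μ, hμ, rfl⟩; exact (key μ hμ).2.2.1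
  have hS1bdda : BddAbove S1 := by
    refine ⟨G, ?_⟩; rintro r ⟨μ, hμ, rfl⟩; exact (key μ hμ).2.2.2.1
  have hinf0 : sInf S0 = 0 := hprior_inf
  have hsupG : sSup S0 = G := hprior_sup
  constructor
  · show sInf S1 = 0
    refine le_antisymm ?_ (le_csInf hS1ne ?_)
    · by_contra hcon
      push_neg at hcon
      set ε := sInf S1 with hεdef
      have hεpos : 0 < ε := hcon
      have hδ : 0 < ε * m / Mx := by positivity
      obtain ⟨r, hrS, hrlt⟩ := (csInf_lt_iff hS0bddb hS0ne).mp
        (show sInf S0 < ε * m / Mx by rw [hinf0]; exact hδ)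
      obtain ⟨μ, hμ, rfl⟩ := hrS
      have hkey := key μ hμ
      have hle := hkey.2.2.2.2.1
      have hlt : Mx * (∫ θ, g θ ∂μ) / m < ε := by
        rw [div_lt_iff₀ hm]
        calc Mx * ∫ θ, g θ ∂μ < Mx * (ε * m / Mx) := mul_lt_mul_of_pos_left hrlt hMx
          _ = ε * m := by field_simp
      have hmem : (∫ θ, g θ * L θ ∂μ) / (∫ θ, L θ ∂μ) ∈ S1 := ⟨μ, hμ, rfl⟩
      have := csInf_le hS1bddb hmem
      linarith
    · rintro r ⟨μ, hμ, rfl⟩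
      exact (key μ hμ).2.2.1
  · show sSup S1 = G
    refine le_antisymm (csSup_le hS1ne ?_) ?_
    · rintro r ⟨μ, hμ, rfl⟩
      exact (key μ hμ).2.2.2.1
    · by_contra hcon
      push_neg at hcon
      have hεpos : 0 < G - sSup S1 := sub_pos.mpr hcon
      set ε := G - sSup S1 with hεdef
      have hδ : 0 < ε * m / Mx := by positivity
      obtain ⟨r, hrS, hrgt⟩ := exists_lt_of_lt_csSup hS0ne
        (show G - ε * m / Mx < sSup S0 by rw [hsupG]; linarith)
      obtain ⟨μ, hμ, rfl⟩ := hrS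
      have hkey := key μ hμ
      have hlow := hkey.2.2.2.2.2
      have h1 : Mx * (G - ∫ θ, g θ ∂μ) / m < ε := by
        rw [div_lt_iff₀ hm]
        have h2 : G - ∫ θ, g θ ∂μ < ε * m / Mx := by linarith
        calc Mx * (G - ∫ θ, g θ ∂μ) < Mx * (ε * m / Mx) := mul_lt_mul_of_pos_left h2 hMx
          _ = ε * m := by field_simp
      have hmem : (∫ θ, g θ * L θ ∂μ) / (∫ θ, L θ ∂μ) ∈ S1 := ⟨μ, hμ, rfl⟩
      have := le_csSup hS1bdda hmem
      linarith
end

section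
/- Fix ε₁, ε₂ ∈ (0,1), integers N ≥ 1 and 0 ≤ n ≤ N, and define the diagnostic-test likelihood L : [0,1] → ℝ by L(θ) = ((1−ε₂)θ + ε₁(1−θ))^n · (ε₂θ + (1−ε₁)(1−θ))^{N−n}. Then L is continuous and strictly positive on [0,1]. Consequently, for any nonempty set M of Borel probability measures on [0,1] and any nonnegative integers n'₁, n'₂ with N' = n'₁ + n'₂ > 0: if inf_{μ∈M} ∫ θ^{n'₁}(1−θ)^{n'₂} dμ(θ) = 0 and sup_{μ∈M} ∫ θ^{n'₁}(1−θ)^{n'₂} dμ(θ) = (n'₁/N')^{n'₁}(n'₂/N')^{n'₂}, then also inf_{μ∈M} (∫ θ^{n'₁}(1−θ)^{n'₂} L(θ) dμ)/(∫ L dμ) = 0 and sup_{μ∈M} (∫ θ^{n'₁}(1−θ)^{n'₂} L(θ) dμ)/(∫ L dμ) = (n'₁/N')^{n'₁}(n'₂/N')^{n'₂}. -/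
open MeasureTheory Filter Topology


lemma amgm_pow (a b : ℕ) (hab : 0 < a + b) (θ : ℝ) (h0 : 0 ≤ θ) (h1 : θ ≤ 1) :
    θ ^ a * (1 - θ) ^ b ≤
      ((a : ℝ) / ((a + b : ℕ) : ℝ)) ^ a * ((b : ℝ) / ((a + b : ℕ) : ℝ)) ^ b := by
  have h1' : 0 ≤ 1 - θ := by linarith
  rcases Nat.eq_zero_or_pos a with ha | ha
  · subst ha
    simp only [pow_zero, one_mul]
    have hb : (0:ℕ) < b := by simpa using hab
    have : ((b : ℝ) / ((0 + b : ℕ) : ℝ)) = 1 := by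
      rw [zero_add]; exact div_self (by exact_mod_cast hb.ne')
    rw [this, one_pow]
    exact pow_le_one₀ h1' (by linarith)
  rcases Nat.eq_zero_or_pos b with hb | hb
  · subst hb
    simp only [pow_zero, mul_one]
    have : ((a : ℝ) / ((a + 0 : ℕ) : ℝ)) = 1 := by
      rw [Nat.add_zero]; exact div_self (by exact_mod_cast ha.ne')
    rw [this, one_pow]
    exact pow_le_one₀ h0 h1
  set Nt : ℝ := ((a + b : ℕ) : ℝ) with hNt
  have hNpos : (0:ℝ) < Nt := by rw [hNt]; exact_mod_cast hab
  set w₁ : ℝ := (a : ℝ) / Nt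
  set w₂ : ℝ := (b : ℝ) / Nt
  have hw₁ : 0 < w₁ := div_pos (by exact_mod_cast ha) hNpos
  have hw₂ : 0 < w₂ := div_pos (by exact_mod_cast hb) hNpos
  have hw : w₁ + w₂ = 1 := by
    show (a:ℝ)/Nt + (b:ℝ)/Nt = 1
    rw [← add_div, div_eq_one_iff_eq hNpos.ne', hNt]
    push_cast
    ring
  set p₁ : ℝ := θ / w₁
  set p₂ : ℝ := (1 - θ) / w₂
  have hp₁ : 0 ≤ p₁ := div_nonneg h0 hw₁.le
  have hp₂ : 0 ≤ p₂ := div_nonneg h1' hw₂.le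
  have key : p₁ ^ w₁ * p₂ ^ w₂ ≤ 1 := by
    have := Real.geom_mean_le_arith_mean2_weighted hw₁.le hw₂.le hp₁ hp₂ hw
    have e1 : w₁ * p₁ = θ := mul_div_cancel₀ θ hw₁.ne'
    have e2 : w₂ * p₂ = 1 - θ := mul_div_cancel₀ (1 - θ) hw₂.ne'
    rw [e1, e2] at this
    linarith
  have key2 : p₁ ^ a * p₂ ^ b ≤ 1 := by
    have hpow : (p₁ ^ w₁ * p₂ ^ w₂) ^ (a + b : ℕ) ≤ 1 := by
      exact pow_le_one₀ (mul_nonneg (Real.rpow_nonneg hp₁ _) (Real.rpow_nonneg hp₂ _)) key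
    calc p₁ ^ a * p₂ ^ b = (p₁ ^ w₁ * p₂ ^ w₂) ^ (a + b : ℕ) := by
          rw [mul_pow, ← Real.rpow_natCast (p₁ ^ w₁), ← Real.rpow_natCast (p₂ ^ w₂),
            ← Real.rpow_mul hp₁, ← Real.rpow_mul hp₂]
          have e1 : w₁ * ((a + b : ℕ) : ℝ) = (a : ℝ) := by
            rw [div_mul_eq_mul_div, ← hNt, mul_div_assoc, div_self hNpos.ne', mul_one]
          have e2 : w₂ * ((a + b : ℕ) : ℝ) = (b : ℝ) := by
            rw [div_mul_eq_mul_div, ← hNt, mul_div_assoc, div_self hNpos.ne', mul_one]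
          rw [e1, e2, Real.rpow_natCast, Real.rpow_natCast]
      _ ≤ 1 := hpow
  have eθ : θ = w₁ * p₁ := (mul_div_cancel₀ θ hw₁.ne').symm
  have eθ' : 1 - θ = w₂ * p₂ := (mul_div_cancel₀ (1 - θ) hw₂.ne').symm
  calc θ ^ a * (1 - θ) ^ b = (w₁ ^ a * w₂ ^ b) * (p₁ ^ a * p₂ ^ b) := by
        conv_lhs => rw [eθ']
        conv_lhs => rw [eθ]
        rw [mul_pow, mul_pow]; ring
    _ ≤ (w₁ ^ a * w₂ ^ b) * 1 := by
        apply mul_le_mul_of_nonneg_left key2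
        positivity
    _ = w₁ ^ a * w₂ ^ b := by ring

lemma integrable_cont_icc {φ : Set.Icc (0:ℝ) 1 → ℝ} (hφ : Continuous φ)
    (μ : Measure (Set.Icc (0:ℝ) 1)) [IsFiniteMeasure μ] : Integrable φ μ :=
  hφ.integrable_of_hasCompactSupport (HasCompactSupport.of_compactSpace φ)

lemma posterior_bounds (μ : Measure (Set.Icc (0:ℝ) 1)) [IsProbabilityMeasure μ]
    (f ℓ : Set.Icc (0:ℝ) 1 → ℝ) (hf : Continuous f) (hℓ : Continuous ℓ)
    (B c C : ℝ) (hc : 0 < c)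
    (hf0 : ∀ θ, 0 ≤ f θ) (hfB : ∀ θ, f θ ≤ B)
    (hℓc : ∀ θ, c ≤ ℓ θ) (hℓC : ∀ θ, ℓ θ ≤ C) :
    0 ≤ (∫ θ, f θ ∂μ) ∧ (∫ θ, f θ ∂μ) ≤ B ∧
    0 ≤ (∫ θ, f θ * ℓ θ ∂μ) / (∫ θ, ℓ θ ∂μ) ∧
    (∫ θ, f θ * ℓ θ ∂μ) / (∫ θ, ℓ θ ∂μ) ≤ B ∧
    c * ((∫ θ, f θ * ℓ θ ∂μ) / (∫ θ, ℓ θ ∂μ)) ≤ C * (∫ θ, f θ ∂μ) ∧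
    c * (B - (∫ θ, f θ * ℓ θ ∂μ) / (∫ θ, ℓ θ ∂μ)) ≤ C * (B - (∫ θ, f θ ∂μ)) := by
  have int_f : Integrable f μ := integrable_cont_icc hf μ
  have int_ℓ : Integrable ℓ μ := integrable_cont_icc hℓ μ
  have int_fℓ : Integrable (fun θ => f θ * ℓ θ) μ := integrable_cont_icc (hf.mul hℓ) μ
  set s := ∫ θ, f θ ∂μ with hs
  set I := ∫ θ, f θ * ℓ θ ∂μ with hI
  set J := ∫ θ, ℓ θ ∂μ with hJdef
  have hℓ0 : ∀ θ, 0 ≤ ℓ θ := fun θ => hc.le.trans (hℓc θ)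
  have hcC : c ≤ C := (hℓc ⟨0, by norm_num⟩).trans (hℓC _)
  have hC : 0 < C := hc.trans_le hcC
  have hJc : c ≤ J := by
    calc c = ∫ _θ : Set.Icc (0:ℝ) 1, c ∂μ := by simp
      _ ≤ J := integral_mono (integrable_const c) int_ℓ hℓc
  have hJpos : 0 < J := hc.trans_le hJc
  have hs0 : 0 ≤ s := integral_nonneg hf0
  have hsB : s ≤ B := by
    calc s ≤ ∫ _θ : Set.Icc (0:ℝ) 1, B ∂μ := integral_mono int_f (integrable_const B) hfB
      _ = B := by simp
  have hI0 : 0 ≤ I := integral_nonneg fun θ => mul_nonneg (hf0 θ) (hℓ0 θ)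
  have hr0 : 0 ≤ I / J := div_nonneg hI0 hJpos.le
  have hIBJ : I ≤ B * J := by
    calc I ≤ ∫ θ, B * ℓ θ ∂μ := by
          refine integral_mono int_fℓ (int_ℓ.const_mul B) fun θ => ?_
          exact mul_le_mul_of_nonneg_right (hfB θ) (hℓ0 θ)
      _ = B * J := integral_const_mul B ℓ
  have hICs : I ≤ C * s := by
    calc I ≤ ∫ θ, C * f θ ∂μ := by
          refine integral_mono int_fℓ (int_f.const_mul C) fun θ => ?_
          calc f θ * ℓ θ ≤ f θ * C := mul_le_mul_of_nonneg_left (hℓC θ) (hf0 θ)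
            _ = C * f θ := mul_comm _ _
      _ = C * s := integral_const_mul C f
  have hJr : J * (I / J) = I := mul_div_cancel₀ I hJpos.ne'
  have hrB : I / J ≤ B := by rw [div_le_iff₀ hJpos]; linarith
  have hBJI : B * J - I ≤ C * (B - s) := by
    have h1 : ∫ θ, (B * ℓ θ - f θ * ℓ θ) ∂μ ≤ ∫ θ, C * (B - f θ) ∂μ := by
      refine integral_mono ((int_ℓ.const_mul B).sub int_fℓ)
        ((integrable_const B).sub int_f |>.const_mul C) fun θ => ?_
      have h2 : (B - f θ) * ℓ θ ≤ (B - f θ) * C :=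
        mul_le_mul_of_nonneg_left (hℓC θ) (by linarith [hfB θ])
      nlinarith [h2]
    rw [integral_sub (int_ℓ.const_mul B) int_fℓ, integral_const_mul] at h1
    rw [integral_const_mul, integral_sub (integrable_const B) int_f] at h1
    simp only [integral_const, probReal_univ, measure_univ, ENNReal.toReal_one, one_smul] at h1
    linarith
  refine ⟨hs0, hsB, hr0, hrB, ?_, ?_⟩
  · calc c * (I / J) ≤ J * (I / J) := mul_le_mul_of_nonneg_right hJc hr0
      _ = I := hJr
      _ ≤ C * s := hICs
  · calc c * (B - I / J) ≤ J * (B - I / J) :=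
          mul_le_mul_of_nonneg_right hJc (by linarith)
      _ = B * J - I := by rw [mul_sub, hJr]; ring
      _ ≤ C * (B - s) := hBJI

/-- **Example 2 (diagnostic test).**
Fix `ε₁, ε₂ ∈ (0,1)`, integers `N ≥ 1` and `0 ≤ n ≤ N`, and the diagnostic-test
likelihood `L θ = ((1-ε₂)θ + ε₁(1-θ))^n · (ε₂θ + (1-ε₁)(1-θ))^{N-n}` on `[0,1]`.
Then `L` is continuous and strictly positive on `[0,1]`.  Consequently, for any
nonempty set `M` of Borel probability measures on `[0,1]` and nonnegative integers
`n'₁, n'₂` with `N' = n'₁ + n'₂ > 0`: if the prior predictive probabilities are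
vacuous, `inf_{μ∈M} ∫ θ^{n'₁}(1-θ)^{n'₂} dμ = 0` and
`sup_{μ∈M} ∫ θ^{n'₁}(1-θ)^{n'₂} dμ = (n'₁/N')^{n'₁}(n'₂/N')^{n'₂}`, then the
posterior predictive probabilities are vacuous as well. -/
theorem diagnostic_test_no_learning
    (ε₁ ε₂ : ℝ) (hε₁ : ε₁ ∈ Set.Ioo (0 : ℝ) 1) (hε₂ : ε₂ ∈ Set.Ioo (0 : ℝ) 1)
    (N n : ℕ) (hN : 1 ≤ N) (hn : n ≤ N) :
    letI L : ℝ → ℝ := fun θ =>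
      ((1 - ε₂) * θ + ε₁ * (1 - θ)) ^ n * (ε₂ * θ + (1 - ε₁) * (1 - θ)) ^ (N - n)
    ContinuousOn L (Set.Icc (0 : ℝ) 1) ∧
    (∀ θ ∈ Set.Icc (0 : ℝ) 1, 0 < L θ) ∧
    (∀ M : Set (Measure (Set.Icc (0 : ℝ) 1)), M.Nonempty →
      (∀ μ ∈ M, IsProbabilityMeasure μ) →
      ∀ n'₁ n'₂ : ℕ, 0 < n'₁ + n'₂ →
      sInf {r | ∃ μ ∈ M,
          r = ∫ θ : Set.Icc (0 : ℝ) 1, (θ : ℝ) ^ n'₁ * (1 - (θ : ℝ)) ^ n'₂ ∂μ} = 0 →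
      sSup {r | ∃ μ ∈ M,
          r = ∫ θ : Set.Icc (0 : ℝ) 1, (θ : ℝ) ^ n'₁ * (1 - (θ : ℝ)) ^ n'₂ ∂μ}
        = ((n'₁ : ℝ) / ((n'₁ + n'₂ : ℕ) : ℝ)) ^ n'₁ *
          ((n'₂ : ℝ) / ((n'₁ + n'₂ : ℕ) : ℝ)) ^ n'₂ →
      (sInf {r | ∃ μ ∈ M,
          r = (∫ θ : Set.Icc (0 : ℝ) 1,
                (θ : ℝ) ^ n'₁ * (1 - (θ : ℝ)) ^ n'₂ * L (θ : ℝ) ∂μ) /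
              (∫ θ : Set.Icc (0 : ℝ) 1, L (θ : ℝ) ∂μ)} = 0 ∧
       sSup {r | ∃ μ ∈ M,
          r = (∫ θ : Set.Icc (0 : ℝ) 1,
                (θ : ℝ) ^ n'₁ * (1 - (θ : ℝ)) ^ n'₂ * L (θ : ℝ) ∂μ) /
              (∫ θ : Set.Icc (0 : ℝ) 1, L (θ : ℝ) ∂μ)}
         = ((n'₁ : ℝ) / ((n'₁ + n'₂ : ℕ) : ℝ)) ^ n'₁ *
           ((n'₂ : ℝ) / ((n'₁ + n'₂ : ℕ) : ℝ)) ^ n'₂)) := by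
  set L : ℝ → ℝ := fun θ =>
    ((1 - ε₂) * θ + ε₁ * (1 - θ)) ^ n * (ε₂ * θ + (1 - ε₁) * (1 - θ)) ^ (N - n) with hLdef
  -- continuity
  have hLcont : Continuous L := by
    show Continuous fun θ : ℝ =>
      ((1 - ε₂) * θ + ε₁ * (1 - θ)) ^ n * (ε₂ * θ + (1 - ε₁) * (1 - θ)) ^ (N - n)
    fun_prop
  -- positivity
  have hLpos : ∀ θ ∈ Set.Icc (0 : ℝ) 1, 0 < L θ := by
    intro θ hθ
    obtain ⟨h0, h1⟩ := hθ
    have hfac1 : 0 < (1 - ε₂) * θ + ε₁ * (1 - θ) := by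
      rcases eq_or_lt_of_le h0 with h | h
      · rw [← h]; ring_nf; nlinarith [hε₁.1]
      · have t1 : 0 < (1 - ε₂) * θ := mul_pos (by linarith [hε₂.2]) h
        have t2 : 0 ≤ ε₁ * (1 - θ) := mul_nonneg hε₁.1.le (by linarith)
        linarith
    have hfac2 : 0 < ε₂ * θ + (1 - ε₁) * (1 - θ) := by
      rcases eq_or_lt_of_le h1 with h | h
      · rw [h]; ring_nf; nlinarith [hε₂.1]
      · have t1 : 0 < (1 - ε₁) * (1 - θ) := mul_pos (by linarith [hε₁.2]) (by linarith)
        have t2 : 0 ≤ ε₂ * θ := mul_nonneg hε₂.1.le h0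
        linarith
    exact mul_pos (pow_pos hfac1 n) (pow_pos hfac2 (N - n))
  refine ⟨hLcont.continuousOn, hLpos, ?_⟩
  -- extrema of L on [0,1]
  obtain ⟨xc, hxc, hmin⟩ := isCompact_Icc.exists_isMinOn
    (Set.nonempty_Icc.2 (zero_le_one)) (hLcont.continuousOn (s := Set.Icc (0:ℝ) 1))
  obtain ⟨xC, hxC, hmax⟩ := isCompact_Icc.exists_isMaxOn
    (Set.nonempty_Icc.2 (zero_le_one)) (hLcont.continuousOn (s := Set.Icc (0:ℝ) 1))
  set c : ℝ := L xc with hcdef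
  set C : ℝ := L xC with hCdef
  have hc : 0 < c := hLpos xc hxc
  have hLc : ∀ θ : Set.Icc (0:ℝ) 1, c ≤ L (θ : ℝ) := fun θ => hmin θ.2
  have hLC : ∀ θ : Set.Icc (0:ℝ) 1, L (θ : ℝ) ≤ C := fun θ => hmax θ.2
  intro M hM hprob a b hab hInf hSup
  set B : ℝ := ((a : ℝ) / ((a + b : ℕ) : ℝ)) ^ a * ((b : ℝ) / ((a + b : ℕ) : ℝ)) ^ b with hBdef
  have hcC : 0 < C := hc.trans_le (hLc ⟨0, by norm_num⟩ |>.trans (hLC ⟨0, by norm_num⟩))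
  -- the key per-measure facts
  have key : ∀ μ ∈ M,
      0 ≤ (∫ θ : Set.Icc (0:ℝ) 1, (θ : ℝ) ^ a * (1 - (θ : ℝ)) ^ b ∂μ) ∧
      (∫ θ : Set.Icc (0:ℝ) 1, (θ : ℝ) ^ a * (1 - (θ : ℝ)) ^ b ∂μ) ≤ B ∧
      0 ≤ (∫ θ : Set.Icc (0:ℝ) 1, (θ : ℝ) ^ a * (1 - (θ : ℝ)) ^ b * L (θ : ℝ) ∂μ) /
          (∫ θ : Set.Icc (0:ℝ) 1, L (θ : ℝ) ∂μ) ∧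
      (∫ θ : Set.Icc (0:ℝ) 1, (θ : ℝ) ^ a * (1 - (θ : ℝ)) ^ b * L (θ : ℝ) ∂μ) /
          (∫ θ : Set.Icc (0:ℝ) 1, L (θ : ℝ) ∂μ) ≤ B ∧
      c * ((∫ θ : Set.Icc (0:ℝ) 1, (θ : ℝ) ^ a * (1 - (θ : ℝ)) ^ b * L (θ : ℝ) ∂μ) /
          (∫ θ : Set.Icc (0:ℝ) 1, L (θ : ℝ) ∂μ))
        ≤ C * (∫ θ : Set.Icc (0:ℝ) 1, (θ : ℝ) ^ a * (1 - (θ : ℝ)) ^ b ∂μ) ∧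
      c * (B - (∫ θ : Set.Icc (0:ℝ) 1, (θ : ℝ) ^ a * (1 - (θ : ℝ)) ^ b * L (θ : ℝ) ∂μ) /
          (∫ θ : Set.Icc (0:ℝ) 1, L (θ : ℝ) ∂μ))
        ≤ C * (B - (∫ θ : Set.Icc (0:ℝ) 1, (θ : ℝ) ^ a * (1 - (θ : ℝ)) ^ b ∂μ)) := by
    intro μ hμ
    haveI := hprob μ hμ
    have hf : Continuous fun θ : Set.Icc (0:ℝ) 1 => (θ : ℝ) ^ a * (1 - (θ : ℝ)) ^ b := by
      fun_prop
    have hℓ : Continuous fun θ : Set.Icc (0:ℝ) 1 => L (θ : ℝ) :=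
      hLcont.comp continuous_subtype_val
    exact posterior_bounds μ _ _ hf hℓ B c C hc
      (fun θ => mul_nonneg (pow_nonneg θ.2.1 a) (pow_nonneg (by linarith [θ.2.2]) b))
      (fun θ => amgm_pow a b hab (θ : ℝ) θ.2.1 θ.2.2)
      hLc hLC
  obtain ⟨μ₀, hμ₀⟩ := hM
  -- names for the sets
  set S := {r | ∃ μ ∈ M,
      r = ∫ θ : Set.Icc (0 : ℝ) 1, (θ : ℝ) ^ a * (1 - (θ : ℝ)) ^ b ∂μ} with hSdef
  set S' := {r | ∃ μ ∈ M,
      r = (∫ θ : Set.Icc (0 : ℝ) 1, (θ : ℝ) ^ a * (1 - (θ : ℝ)) ^ b * L (θ : ℝ) ∂μ) /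
          (∫ θ : Set.Icc (0 : ℝ) 1, L (θ : ℝ) ∂μ)} with hS'def
  have hS'ne : S'.Nonempty := ⟨_, ⟨μ₀, hμ₀, rfl⟩⟩
  have hSne : S.Nonempty := ⟨_, ⟨μ₀, hμ₀, rfl⟩⟩
  have hS'lb : ∀ r ∈ S', 0 ≤ r := by
    rintro r ⟨μ, hμ, rfl⟩
    exact (key μ hμ).2.2.1
  have hS'ub : ∀ r ∈ S', r ≤ B := by
    rintro r ⟨μ, hμ, rfl⟩
    exact (key μ hμ).2.2.2.1
  have hS'bddAbove : BddAbove S' := ⟨B, hS'ub⟩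
  have hS'bddBelow : BddBelow S' := ⟨0, hS'lb⟩
  constructor
  · -- sInf S' = 0
    refine le_antisymm ?_ (le_csInf hS'ne hS'lb)
    -- show sInf S' ≤ 0 using that (c/C) * sInf S' is a lower bound of S
    have hlb : ∀ s ∈ S, (c / C) * sInf S' ≤ s := by
      rintro s ⟨μ, hμ, rfl⟩
      have h1 := (key μ hμ).2.2.2.2.1
      have h2 : sInf S' ≤ _ := csInf_le hS'bddBelow ⟨μ, hμ, rfl⟩
      rw [div_mul_eq_mul_div, div_le_iff₀ hcC]
      have h3 : c * sInf S' ≤ c *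
          ((∫ θ : Set.Icc (0:ℝ) 1, (θ : ℝ) ^ a * (1 - (θ : ℝ)) ^ b * L (θ : ℝ) ∂μ) /
          (∫ θ : Set.Icc (0:ℝ) 1, L (θ : ℝ) ∂μ)) :=
        mul_le_mul_of_nonneg_left h2 hc.le
      calc c * sInf S' ≤ _ := h3
        _ ≤ C * (∫ θ : Set.Icc (0:ℝ) 1, (θ : ℝ) ^ a * (1 - (θ : ℝ)) ^ b ∂μ) := h1
        _ = (∫ θ : Set.Icc (0:ℝ) 1, (θ : ℝ) ^ a * (1 - (θ : ℝ)) ^ b ∂μ) * C := mul_comm _ _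
    have := le_csInf hSne hlb
    rw [hInf] at this
    nlinarith [div_pos hc hcC]
  · -- sSup S' = B
    refine le_antisymm (csSup_le hS'ne hS'ub) ?_
    set D := sSup S' with hDdef
    have hub : ∀ s ∈ S, s ≤ B - (c * (B - D)) / C := by
      rintro s ⟨μ, hμ, rfl⟩
      have h1 := (key μ hμ).2.2.2.2.2
      have h2 : _ ≤ D := le_csSup hS'bddAbove ⟨μ, hμ, rfl⟩
      -- c * (B - D) ≤ c * (B - r) ≤ C * (B - s)
      have h3 : c * (B - D) ≤ C *
          (B - (∫ θ : Set.Icc (0:ℝ) 1, (θ : ℝ) ^ a * (1 - (θ : ℝ)) ^ b ∂μ)) := by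
        have := mul_le_mul_of_nonneg_left (sub_le_sub_left h2 B) hc.le
        linarith
      rw [le_sub_comm, div_le_iff₀ hcC]
      · nlinarith [h3]
    have := csSup_le hSne hub
    rw [hSup] at this
    have hfin : c * (B - D) ≤ 0 := by
      have h4 : (c * (B - D)) / C ≤ 0 := by linarith
      have h5 := mul_le_mul_of_nonneg_right h4 hcC.le
      rwa [div_mul_cancel₀ _ hcC.ne', zero_mul] at h5
    nlinarith [hc, hfin]
end
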